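/- arXiv:2412.20237 — 7 statements merged into one kernel-verified Lean document; each statement's English description precedes it below -/
import Mathlib

section
/- Fix a nonempty closed set S ⊆ ℝ^n, a constant κ ≥ 0, and points ξ̂_1,…,ξ̂_N ∈ ℝ^n. Then the supremum, over all Borel probability measures μ on ℝ^n with finite first moment (∫‖ξ‖ dμ < ∞), of the penalized quantity μ(S) − κ·d_W(μ, P̂_N) equals (1/N)·∑_{i=1}^N max(1 − κ·infDist(ξ̂_i, S), 0). -/
open Matrix MeasureTheory Metric
open scoped ENNReal

/-- The empirical distribution `P̂_N = (1/N) ∑ δ_{ξ̂ᵢ}` on `ℝ^n`. -/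
noncomputable def empirical {n N : ℕ} (ξhat : Fin N → EuclideanSpace ℝ (Fin n)) :
    Measure (EuclideanSpace ℝ (Fin n)) :=
  (N : ℝ≥0∞)⁻¹ • ∑ i : Fin N, Measure.dirac (ξhat i)

/-- Type-1 Wasserstein distance: infimum over couplings of the expected distance. -/
noncomputable def wassersteinDist {n : ℕ} (μ ν : Measure (EuclideanSpace ℝ (Fin n))) : ℝ :=
  sInf { c : ℝ | ∃ Q : Measure (EuclideanSpace ℝ (Fin n) × EuclideanSpace ℝ (Fin n)),
    IsProbabilityMeasure Q ∧ Q.map Prod.fst = μ ∧ Q.map Prod.snd = ν ∧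
    Integrable (fun p => ‖p.1 - p.2‖) Q ∧ c = ∫ p, ‖p.1 - p.2‖ ∂Q }

section Aux

variable {α : Type*} [MeasurableSpace α] [MeasurableSingletonClass α]

lemma aux_integrable_dirac {f : α → ℝ} (a : α) : Integrable f (Measure.dirac a) := by
  have h : f =ᵐ[Measure.dirac a] fun _ => f a := by
    rw [MeasureTheory.ae_dirac_eq]
    exact Filter.eventually_pure.mpr rfl
  exact (integrable_congr h).mpr (integrable_const _)

lemma aux_integrable_esum {N : ℕ} (hN : 0 < N) (g : Fin N → α) (f : α → ℝ) :
    Integrable f ((N : ℝ≥0∞)⁻¹ • ∑ i : Fin N, Measure.dirac (g i)) := by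
  rw [integrable_smul_measure (by simp [hN.ne']) (by simp [hN.ne'])]
  rw [integrable_finset_sum_measure]
  exact fun i _ => aux_integrable_dirac (g i)

lemma aux_integral_esum {N : ℕ} (g : Fin N → α) (f : α → ℝ) :
    ∫ x, f x ∂((N : ℝ≥0∞)⁻¹ • ∑ i : Fin N, Measure.dirac (g i))
      = (1 / N : ℝ) * ∑ i : Fin N, f (g i) := by
  rw [integral_smul_measure, integral_finset_sum_measure (fun i _ => aux_integrable_dirac (g i))]
  simp [integral_dirac, one_div]

omit [MeasurableSingletonClass α] in
lemma aux_isProb_esum {N : ℕ} (hN : 0 < N) (g : Fin N → α) :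
    IsProbabilityMeasure ((N : ℝ≥0∞)⁻¹ • ∑ i : Fin N, Measure.dirac (g i)) := by
  constructor
  simp [Measure.smul_apply, Measure.finset_sum_apply]
  rw [ENNReal.inv_mul_cancel (by simp [hN.ne']) (by simp)]

omit [MeasurableSingletonClass α] in
lemma aux_esum_apply_toReal {N : ℕ} (g : Fin N → α) {S : Set α} (hSm : MeasurableSet S) :
    ((((N : ℝ≥0∞)⁻¹ • ∑ i : Fin N, Measure.dirac (g i))) S).toReal
      = (1 / N : ℝ) * ∑ i : Fin N, S.indicator (fun _ => (1 : ℝ)) (g i) := by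
  rw [Measure.smul_apply, Measure.finset_sum_apply]
  simp only [Measure.dirac_apply' _ hSm]
  rw [smul_eq_mul, ENNReal.toReal_mul, ENNReal.toReal_sum (fun i _ => by
    by_cases h : g i ∈ S <;> simp [Set.indicator_apply, h])]
  congr 1
  · simp [ENNReal.toReal_inv, one_div]
  · exact Finset.sum_congr rfl fun i _ => by
      by_cases h : g i ∈ S <;> simp [Set.indicator_apply, h]

omit [MeasurableSingletonClass α] in
lemma aux_map_esum {β : Type*} [MeasurableSpace β] {N : ℕ} {f : α → β} (hf : Measurable f)
    (g : Fin N → α) :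
    Measure.map f ((N : ℝ≥0∞)⁻¹ • ∑ i : Fin N, Measure.dirac (g i))
      = (N : ℝ≥0∞)⁻¹ • ∑ i : Fin N, Measure.dirac (f (g i)) := by
  ext s hs
  rw [Measure.map_apply hf hs]
  simp only [Measure.smul_apply, Measure.finset_sum_apply, Measure.dirac_apply' _ (hf hs),
    Measure.dirac_apply' _ hs, smul_eq_mul]
  congr 1

end Aux

/-- Lemma 1 of the paper (with the finite LP solved in closed form): the supremum over
probability measures with finite first moment of the Wasserstein-penalized probability of a
nonempty closed set `S` equals `(1/N) ∑ᵢ max(1 - κ·infDist(ξ̂ᵢ, S), 0)`. -/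
theorem penalized_sup_eq {n N : ℕ} (hN : 0 < N)
    (S : Set (EuclideanSpace ℝ (Fin n))) (hS : IsClosed S) (hSne : S.Nonempty)
    (κ : ℝ) (hκ : 0 ≤ κ) (ξhat : Fin N → EuclideanSpace ℝ (Fin n)) :
    sSup { r : ℝ | ∃ μ : Measure (EuclideanSpace ℝ (Fin n)),
        IsProbabilityMeasure μ ∧ Integrable (fun ξ => ‖ξ‖) μ ∧
        r = (μ S).toReal - κ * wassersteinDist μ (empirical ξhat) }
      = (1 / N : ℝ) * ∑ i : Fin N, max (1 - κ * infDist (ξhat i) S) 0 := by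
  classical
  let E := EuclideanSpace ℝ (Fin n)
  set Pe : Measure E := empirical ξhat with hPe_def
  set f : E → ℝ := fun x => max (1 - κ * infDist x S) 0 with hf_def
  set R : ℝ := (1 / N : ℝ) * ∑ i : Fin N, f (ξhat i) with hR_def
  have hPe_eq : Pe = (N : ℝ≥0∞)⁻¹ • ∑ i : Fin N, Measure.dirac (ξhat i) := rfl
  have hPep : IsProbabilityMeasure Pe := hPe_eq ▸ aux_isProb_esum hN ξhat
  have hf0 : ∀ x, (0 : ℝ) ≤ f x := fun x => le_max_right _ _
  have hfc : Continuous f :=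
    (continuous_const.sub (continuous_const.mul (continuous_infDist_pt S))).max continuous_const
  -- cost set for a given μ
  set C : Measure E → Set ℝ := fun μ =>
    { c : ℝ | ∃ Q : Measure (E × E),
      IsProbabilityMeasure Q ∧ Q.map Prod.fst = μ ∧ Q.map Prod.snd = Pe ∧
      Integrable (fun p => ‖p.1 - p.2‖) Q ∧ c = ∫ p, ‖p.1 - p.2‖ ∂Q } with hC_def
  have hwd : ∀ μ : Measure E, wassersteinDist μ Pe = sInf (C μ) := fun μ => rfl
  have hC0 : ∀ μ : Measure E, ∀ c ∈ C μ, (0 : ℝ) ≤ c := by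
    rintro μ c ⟨Q, -, -, -, -, rfl⟩
    exact integral_nonneg fun p => norm_nonneg _
  -- key upper bound: μ(S) ≤ R + κ c for every coupling cost c
  have key : ∀ μ : Measure E, IsProbabilityMeasure μ → ∀ c ∈ C μ,
      (μ S).toReal ≤ R + κ * c := by
    rintro μ hμ c ⟨Q, hQp, hfst, hsnd, hQint, rfl⟩
    set g : E → ℝ := S.indicator (fun _ => (1 : ℝ)) with hg_def
    have hgm : Measurable g := measurable_const.indicator hS.measurableSet
    have hgint1 : Integrable g μ := (integrable_const (1 : ℝ)).indicator hS.measurableSet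
    have hgintQ : Integrable (fun p : E × E => g p.1) Q := by
      refine (integrable_map_measure hgm.aestronglyMeasurable
        measurable_fst.aemeasurable).mp ?_
      rw [hfst]; exact hgint1
    have hfintPe : Integrable f Pe := hPe_eq ▸ aux_integrable_esum hN ξhat f
    have hfintQ : Integrable (fun p : E × E => f p.2) Q := by
      refine (integrable_map_measure hfc.measurable.aestronglyMeasurable
        measurable_snd.aemeasurable).mp ?_
      rw [hsnd]; exact hfintPe
    have h1 : (μ S).toReal = ∫ x, g x ∂μ := by
      rw [hg_def, integral_indicator_const (1 : ℝ) hS.measurableSet]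
      simp
      rfl
    have h2 : ∫ x, g x ∂μ = ∫ p, g p.1 ∂Q := by
      rw [← hfst, integral_map measurable_fst.aemeasurable hgm.aestronglyMeasurable]
    have hpt : ∀ p : E × E, g p.1 ≤ f p.2 + κ * ‖p.1 - p.2‖ := by
      intro p
      by_cases hp : p.1 ∈ S
      · have hd : infDist p.2 S ≤ ‖p.1 - p.2‖ := by
          have := infDist_le_dist_of_mem (x := p.2) hp
          rwa [dist_eq_norm, norm_sub_rev] at this
        have hfp : 1 - κ * ‖p.1 - p.2‖ ≤ f p.2 := by
          refine le_trans ?_ (le_max_left _ _)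
          have := mul_le_mul_of_nonneg_left hd hκ
          linarith
        simp only [hg_def, Set.indicator_of_mem hp]
        linarith
      · simp only [hg_def, Set.indicator_of_notMem hp]
        exact add_nonneg (hf0 _) (mul_nonneg hκ (norm_nonneg _))
    have h3 : ∫ p, g p.1 ∂Q ≤ ∫ p, (f p.2 + κ * ‖p.1 - p.2‖) ∂Q :=
      integral_mono hgintQ (hfintQ.add (hQint.const_mul κ)) hpt
    have h4 : ∫ p, (f p.2 + κ * ‖p.1 - p.2‖) ∂Q
        = (∫ p : E × E, f p.2 ∂Q) + κ * ∫ p, ‖p.1 - p.2‖ ∂Q := by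
      rw [integral_add hfintQ (hQint.const_mul κ), integral_const_mul]
    have h5 : ∫ p : E × E, f p.2 ∂Q = R := by
      rw [← integral_map measurable_snd.aemeasurable hfc.measurable.aestronglyMeasurable,
        hsnd, hPe_eq, aux_integral_esum]
    linarith [h1, h2, h3, h4, h5]
  -- upper bound for all members
  have hub : ∀ r ∈ { r : ℝ | ∃ μ : Measure E,
      IsProbabilityMeasure μ ∧ Integrable (fun ξ => ‖ξ‖) μ ∧
      r = (μ S).toReal - κ * wassersteinDist μ (empirical ξhat) }, r ≤ R := by
    rintro r ⟨μ, hμp, hμint, rfl⟩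
    -- build the product coupling to show C μ is nonempty
    haveI := hμp; haveI := hPep
    set Q0 : Measure (E × E) := μ.prod Pe with hQ0_def
    have hfst0 : Q0.map Prod.fst = μ := by
      rw [hQ0_def, Measure.map_fst_prod, measure_univ, one_smul]
    have hsnd0 : Q0.map Prod.snd = Pe := by
      rw [hQ0_def, Measure.map_snd_prod, measure_univ, one_smul]
    have hn1 : Integrable (fun p : E × E => ‖p.1‖) Q0 := by
      refine (integrable_map_measure continuous_norm.measurable.aestronglyMeasurable
        measurable_fst.aemeasurable).mp ?_
      rw [hfst0]; exact hμint
    have hn2 : Integrable (fun p : E × E => ‖p.2‖) Q0 := by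
      refine (integrable_map_measure continuous_norm.measurable.aestronglyMeasurable
        measurable_snd.aemeasurable).mp ?_
      rw [hsnd0]
      exact hPe_eq ▸ aux_integrable_esum hN ξhat _
    have htot : Integrable (fun p : E × E => ‖p.1 - p.2‖) Q0 := by
      refine (hn1.add hn2).mono' ((continuous_fst.sub continuous_snd).norm).aestronglyMeasurable ?_
      exact Filter.Eventually.of_forall fun p => by
        rw [norm_norm]; exact norm_sub_le _ _
    have hmem0 : (∫ p, ‖p.1 - p.2‖ ∂Q0) ∈ C μ :=
      ⟨Q0, inferInstance, hfst0, hsnd0, htot, rfl⟩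
    rcases hκ.eq_or_lt with h0 | hpos
    · have := key μ hμp _ hmem0
      rw [← h0] at this ⊢
      simpa using this
    · have hdw : ((μ S).toReal - R) / κ ≤ wassersteinDist μ Pe := by
        rw [hwd]
        refine le_csInf ⟨_, hmem0⟩ fun c hc => ?_
        rw [div_le_iff₀ hpos]
        have := key μ hμp c hc
        nlinarith
      have h6 := mul_le_mul_of_nonneg_left hdw hκ
      rw [mul_div_cancel₀ _ hpos.ne'] at h6
      have : wassersteinDist μ (empirical ξhat) = wassersteinDist μ Pe := rfl
      rw [this]
      linarith
  -- the optimal measure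
  choose p hpS hpd using fun i => hS.exists_infDist_eq_dist hSne (ξhat i)
  set η : Fin N → E := fun i => if 0 < 1 - κ * infDist (ξhat i) S then p i else ξhat i
    with hη_def
  set μs : Measure E := empirical η with hμs_def
  have hμs_eq : μs = (N : ℝ≥0∞)⁻¹ • ∑ i : Fin N, Measure.dirac (η i) := rfl
  have hμsp : IsProbabilityMeasure μs := hμs_eq ▸ aux_isProb_esum hN η
  have hμsint : Integrable (fun ξ : E => ‖ξ‖) μs := hμs_eq ▸ aux_integrable_esum hN η _
  set Q : Measure (E × E) := (N : ℝ≥0∞)⁻¹ • ∑ i : Fin N, Measure.dirac ((η i, ξhat i)) with hQ_def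
  set cs : ℝ := (1 / N : ℝ) * ∑ i : Fin N, ‖η i - ξhat i‖ with hcs_def
  have hcs_eq : cs = ∫ q : E × E, ‖q.1 - q.2‖ ∂Q := by
    rw [hQ_def, aux_integral_esum (fun i => ((η i, ξhat i) : E × E)) (fun q => ‖q.1 - q.2‖)]
  have hmem : cs ∈ C μs := by
    refine ⟨Q, hQ_def ▸ aux_isProb_esum hN _, ?_, ?_, hQ_def ▸ aux_integrable_esum hN _ _, hcs_eq⟩
    · rw [hQ_def, aux_map_esum measurable_fst]; rfl
    · rw [hQ_def, aux_map_esum measurable_snd]; rfl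
  have hdw_le : wassersteinDist μs Pe ≤ cs := by
    rw [hwd]
    exact csInf_le ⟨0, fun c hc => hC0 μs c hc⟩ hmem
  have hμsS : (μs S).toReal = (1 / N : ℝ) * ∑ i : Fin N, S.indicator (fun _ => (1 : ℝ)) (η i) := by
    rw [hμs_eq]; exact aux_esum_apply_toReal η hS.measurableSet
  have hterm : ∀ i : Fin N, f (ξhat i)
      ≤ S.indicator (fun _ => (1 : ℝ)) (η i) - κ * ‖η i - ξhat i‖ := by
    intro i
    by_cases h : 0 < 1 - κ * infDist (ξhat i) S
    · have hηi : η i = p i := if_pos h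
      have hnorm : ‖η i - ξhat i‖ = infDist (ξhat i) S := by
        rw [hηi, hpd i, dist_eq_norm, norm_sub_rev]
      have hind : S.indicator (fun _ => (1 : ℝ)) (η i) = 1 := by
        rw [hηi, Set.indicator_of_mem (hpS i)]
      rw [hnorm, hind, hf_def]
      simp only
      rw [max_eq_left h.le]
    · have hηi : η i = ξhat i := if_neg h
      have hnorm : ‖η i - ξhat i‖ = 0 := by rw [hηi, sub_self, norm_zero]
      rw [hnorm, hf_def]
      simp only
      rw [max_eq_right (by linarith)]
      simpa using Set.indicator_nonneg (fun _ _ => zero_le_one) (η i)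
  set rs : ℝ := (μs S).toReal - κ * wassersteinDist μs (empirical ξhat) with hrs_def
  have hrsmem : rs ∈ { r : ℝ | ∃ μ : Measure E,
      IsProbabilityMeasure μ ∧ Integrable (fun ξ => ‖ξ‖) μ ∧
      r = (μ S).toReal - κ * wassersteinDist μ (empirical ξhat) } :=
    ⟨μs, hμsp, hμsint, rfl⟩
  have hrs_ge : R ≤ rs := by
    have h1 : R ≤ (1 / N : ℝ) * ∑ i : Fin N,
        (S.indicator (fun _ => (1 : ℝ)) (η i) - κ * ‖η i - ξhat i‖) := by
      rw [hR_def]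
      refine mul_le_mul_of_nonneg_left (Finset.sum_le_sum fun i _ => hterm i) (by positivity)
    have h2 : (1 / N : ℝ) * ∑ i : Fin N,
        (S.indicator (fun _ => (1 : ℝ)) (η i) - κ * ‖η i - ξhat i‖)
        = (μs S).toReal - κ * cs := by
      rw [hμsS, hcs_def, Finset.sum_sub_distrib, ← Finset.mul_sum]
      ring
    have h3 : κ * wassersteinDist μs Pe ≤ κ * cs := mul_le_mul_of_nonneg_left hdw_le hκ
    have h4 : wassersteinDist μs (empirical ξhat) = wassersteinDist μs Pe := rfl
    rw [hrs_def, h4]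
    linarith
  have hrs_eq : rs = R := le_antisymm (hub rs hrsmem) hrs_ge
  refine le_antisymm (csSup_le ⟨rs, hrsmem⟩ hub) ?_
  calc (1 / N : ℝ) * ∑ i : Fin N, max (1 - κ * infDist (ξhat i) S) 0
      = rs := hrs_eq.symm
    _ ≤ _ := le_csSup ⟨R, hub⟩ hrsmem
end

section
/- Fix a nonempty closed set S ⊆ ℝ^n, a constant κ ≥ 0, and points ξ̂_1,…,ξ̂_N ∈ ℝ^n. Consider all Borel probability measures Q on ℝ^n × ℝ^n whose second marginal equals the empirical distribution P̂_N and for which the map (ξ,ξ′) ↦ ‖ξ−ξ′‖ is Q-integrable. Then the supremum over all such Q of ∫ (1_S(ξ) − κ·‖ξ−ξ′‖) dQ(ξ,ξ′) equals (1/N)·∑_{i=1}^N sup_{ξ∈ℝ^n} (1_S(ξ) − κ·‖ξ−ξ̂_i‖). -/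
open Matrix MeasureTheory Metric
open scoped ENNReal

section Aux

variable {n : ℕ}

local notation "E" => EuclideanSpace ℝ (Fin n)

lemma myBdd (S : Set E) (κ : ℝ) (hκ : 0 ≤ κ) (ξ' : E) :
    BddAbove (Set.range fun ξ : E => S.indicator (fun _ => (1 : ℝ)) ξ - κ * ‖ξ - ξ'‖) := by
  refine ⟨1, ?_⟩
  rintro _ ⟨ξ, rfl⟩
  dsimp only
  have h1 : S.indicator (fun _ => (1 : ℝ)) ξ ≤ 1 := by
    by_cases h : ξ ∈ S <;> simp [Set.indicator, h]
  have h2 : 0 ≤ κ * ‖ξ - ξ'‖ := mul_nonneg hκ (norm_nonneg _)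
  linarith

lemma sup_formula (S : Set E) (hS : IsClosed S) (hSne : S.Nonempty)
    (κ : ℝ) (hκ : 0 ≤ κ) (ξ' : E) :
    (⨆ ξ : E, (S.indicator (fun _ => (1 : ℝ)) ξ - κ * ‖ξ - ξ'‖))
      = max (1 - κ * infDist ξ' S) 0 := by
  obtain ⟨y, hyS, hy⟩ := hS.exists_infDist_eq_dist hSne ξ'
  apply le_antisymm
  · refine ciSup_le fun ξ => ?_
    by_cases h : ξ ∈ S
    · have : infDist ξ' S ≤ ‖ξ - ξ'‖ := by
        simpa [dist_eq_norm, norm_sub_rev] using infDist_le_dist_of_mem (x := ξ') h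
      have := mul_le_mul_of_nonneg_left this hκ
      simp only [Set.indicator_of_mem h]
      exact le_max_of_le_left (by linarith)
    · simp only [Set.indicator_of_notMem h]
      exact le_max_of_le_right (by
        have : 0 ≤ κ * ‖ξ - ξ'‖ := mul_nonneg hκ (norm_nonneg _)
        linarith)
  · refine max_le ?_ ?_
    · have h := le_ciSup (myBdd S κ hκ ξ') y
      have hyv : S.indicator (fun _ => (1 : ℝ)) y - κ * ‖y - ξ'‖ = 1 - κ * infDist ξ' S := by
        rw [Set.indicator_of_mem hyS, hy, dist_eq_norm, norm_sub_rev]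
      linarith [h, hyv ▸ h]
    · have h := le_ciSup (myBdd S κ hκ ξ') ξ'
      have : (0 : ℝ) ≤ S.indicator (fun _ => (1 : ℝ)) ξ' - κ * ‖ξ' - ξ'‖ := by
        by_cases hm : ξ' ∈ S <;> simp [Set.indicator, hm]
      linarith

lemma sup_attained (S : Set E) (hS : IsClosed S) (hSne : S.Nonempty)
    (κ : ℝ) (hκ : 0 ≤ κ) (ξ' : E) :
    ∃ ξstar : E, (S.indicator (fun _ => (1 : ℝ)) ξstar - κ * ‖ξstar - ξ'‖)
      = (⨆ ξ : E, (S.indicator (fun _ => (1 : ℝ)) ξ - κ * ‖ξ - ξ'‖)) := by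
  rw [sup_formula S hS hSne κ hκ ξ']
  obtain ⟨y, hyS, hy⟩ := hS.exists_infDist_eq_dist hSne ξ'
  rcases le_or_gt 0 (1 - κ * infDist ξ' S) with h | h
  · refine ⟨y, ?_⟩
    rw [Set.indicator_of_mem hyS, max_eq_left h, hy, dist_eq_norm, norm_sub_rev]
  · have hξ' : ξ' ∉ S := by
      intro hm
      have : infDist ξ' S = 0 := infDist_zero_of_mem hm
      rw [this, mul_zero] at h; linarith
    refine ⟨ξ', ?_⟩
    rw [Set.indicator_of_notMem hξ', max_eq_right h.le]
    simp

lemma integrable_dirac_of_meas {α : Type*} [MeasurableSpace α] {f : α → ℝ}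
    (hf : Measurable f) (a : α) : Integrable f (Measure.dirac a) := by
  refine ⟨hf.aestronglyMeasurable, ?_⟩
  rw [HasFiniteIntegral, lintegral_dirac' _ hf.enorm]
  exact enorm_lt_top

lemma map_finset_sum' {α β ι : Type*} [MeasurableSpace α] [MeasurableSpace β]
    {f : α → β} (hf : Measurable f) (s : Finset ι) (μ : ι → Measure α) :
    (∑ i ∈ s, μ i).map f = ∑ i ∈ s, (μ i).map f := by
  induction s using Finset.cons_induction with
  | empty => simp [Measure.map_zero]
  | cons a s ha ih => simp [Finset.sum_cons, Measure.map_add _ _ hf, ih]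

end Aux

/-- Marginal-decomposition step in the proof of Lemma 1 of the paper: the supremum over
probability measures `Q` on `ℝ^n × ℝ^n` with second marginal `P̂_N` (and integrable distance)
of `∫ (1_S(ξ) - κ‖ξ - ξ'‖) dQ` equals `(1/N) ∑ᵢ sup_ξ (1_S(ξ) - κ‖ξ - ξ̂ᵢ‖)`. -/
theorem coupling_sup_eq_sum_pointwise_sup {n N : ℕ} (hN : 0 < N)
    (S : Set (EuclideanSpace ℝ (Fin n))) (hS : IsClosed S) (hSne : S.Nonempty)
    (κ : ℝ) (hκ : 0 ≤ κ) (ξhat : Fin N → EuclideanSpace ℝ (Fin n)) :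
    sSup { r : ℝ | ∃ Q : Measure (EuclideanSpace ℝ (Fin n) × EuclideanSpace ℝ (Fin n)),
        IsProbabilityMeasure Q ∧ Q.map Prod.snd = empirical ξhat ∧
        Integrable (fun p => ‖p.1 - p.2‖) Q ∧
        r = ∫ p, (S.indicator (fun _ => (1 : ℝ)) p.1 - κ * ‖p.1 - p.2‖) ∂Q }
      = (1 / N : ℝ) * ∑ i : Fin N,
          ⨆ ξ : EuclideanSpace ℝ (Fin n),
            (S.indicator (fun _ => (1 : ℝ)) ξ - κ * ‖ξ - ξhat i‖) := by
  set F : EuclideanSpace ℝ (Fin n) × EuclideanSpace ℝ (Fin n) → ℝ := fun p => S.indicator (fun _ => (1 : ℝ)) p.1 - κ * ‖p.1 - p.2‖ with hF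
  set g : EuclideanSpace ℝ (Fin n) → ℝ := fun ξ' => max (1 - κ * infDist ξ' S) 0 with hg
  have hNne : (N : ℝ≥0∞) ≠ 0 := by exact_mod_cast Nat.cast_ne_zero.2 hN.ne'
  have hNnetop : (N : ℝ≥0∞) ≠ ⊤ := ENNReal.natCast_ne_top N
  have hFmeas : Measurable F := by
    exact ((measurable_const.indicator hS.measurableSet).comp measurable_fst).sub
      ((continuous_const.mul (continuous_fst.sub continuous_snd).norm).measurable)
  have hgcont : Continuous g :=
    (continuous_const.sub (continuous_const.mul (continuous_infDist_pt S))).max continuous_const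
  set Rhs : ℝ := (1 / N : ℝ) * ∑ i : Fin N,
      ⨆ ξ : EuclideanSpace ℝ (Fin n), (S.indicator (fun _ => (1 : ℝ)) ξ - κ * ‖ξ - ξhat i‖) with hRhs
  -- the maximizers
  have hchoice : ∀ i : Fin N, ∃ ξstar : EuclideanSpace ℝ (Fin n),
      (S.indicator (fun _ => (1 : ℝ)) ξstar - κ * ‖ξstar - ξhat i‖)
        = ⨆ ξ : EuclideanSpace ℝ (Fin n), (S.indicator (fun _ => (1 : ℝ)) ξ - κ * ‖ξ - ξhat i‖) :=
    fun i => sup_attained S hS hSne κ hκ (ξhat i)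
  choose ξstar hξstar using hchoice
  -- membership: Rhs is attained
  have hmem : Rhs ∈ { r : ℝ | ∃ Q : Measure (EuclideanSpace ℝ (Fin n) × EuclideanSpace ℝ (Fin n)),
      IsProbabilityMeasure Q ∧ Q.map Prod.snd = empirical ξhat ∧
      Integrable (fun p => ‖p.1 - p.2‖) Q ∧
      r = ∫ p, (S.indicator (fun _ => (1 : ℝ)) p.1 - κ * ‖p.1 - p.2‖) ∂Q } := by
    refine ⟨(N : ℝ≥0∞)⁻¹ • ∑ i : Fin N, Measure.dirac (ξstar i, ξhat i), ?_, ?_, ?_, ?_⟩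
    · constructor
      simp [Measure.smul_apply, Measure.finset_sum_apply, smul_eq_mul,
        ENNReal.inv_mul_cancel hNne hNnetop]
    · rw [Measure.map_smul, map_finset_sum' measurable_snd]
      simp only [Measure.map_dirac' measurable_snd]
      rfl
    · refine (integrable_smul_measure (ENNReal.inv_ne_zero.2 hNnetop)
        (ENNReal.inv_ne_top.2 hNne)).2 ?_
      refine integrable_finset_sum_measure.2 fun i _ => ?_
      exact integrable_dirac_of_meas (continuous_fst.sub continuous_snd).norm.measurable _
    · rw [integral_smul_measure, integral_finset_sum_measure
        (fun i _ => integrable_dirac_of_meas hFmeas _)]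
      simp only [integral_dirac' _ _ hFmeas.stronglyMeasurable]
      rw [hRhs]
      simp only [smul_eq_mul, ENNReal.toReal_inv, ENNReal.toReal_natCast, one_div]
      congr 1
      exact Finset.sum_congr rfl fun i _ => (hξstar i).symm
  -- upper bound
  have hub : ∀ r ∈ { r : ℝ | ∃ Q : Measure (EuclideanSpace ℝ (Fin n) × EuclideanSpace ℝ (Fin n)),
      IsProbabilityMeasure Q ∧ Q.map Prod.snd = empirical ξhat ∧
      Integrable (fun p => ‖p.1 - p.2‖) Q ∧
      r = ∫ p, (S.indicator (fun _ => (1 : ℝ)) p.1 - κ * ‖p.1 - p.2‖) ∂Q }, r ≤ Rhs := by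
    rintro r ⟨Q, hQprob, hQmap, hQint, rfl⟩
    have hFint : Integrable F Q := by
      have h1 : Integrable (fun p : EuclideanSpace ℝ (Fin n) × EuclideanSpace ℝ (Fin n) => S.indicator (fun _ => (1 : ℝ)) p.1) Q := by
        have : (fun p : EuclideanSpace ℝ (Fin n) × EuclideanSpace ℝ (Fin n) => S.indicator (fun _ => (1 : ℝ)) p.1)
            = (Prod.fst ⁻¹' S).indicator (fun _ => (1 : ℝ)) := by
          ext p; by_cases h : p.1 ∈ S <;> simp [Set.indicator, h]
        rw [this]
        exact (integrable_const (1 : ℝ)).indicator (hS.measurableSet.preimage measurable_fst)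
      exact h1.sub (hQint.const_mul κ)
    have hgsint : Integrable (fun p : EuclideanSpace ℝ (Fin n) × EuclideanSpace ℝ (Fin n) => g p.2) Q := by
      refine (integrable_const (1 : ℝ)).mono'
        ((hgcont.comp continuous_snd).measurable.aestronglyMeasurable) ?_
      refine Filter.Eventually.of_forall fun p => ?_
      have h0 : (0 : ℝ) ≤ g p.2 := le_max_right _ _
      have h1 : g p.2 ≤ 1 := by
        refine max_le ?_ zero_le_one
        have : 0 ≤ κ * infDist p.2 S := mul_nonneg hκ (infDist_nonneg)
        linarith
      rw [Real.norm_eq_abs, abs_of_nonneg h0]; exact h1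
    have hle : ∀ p : EuclideanSpace ℝ (Fin n) × EuclideanSpace ℝ (Fin n), F p ≤ g p.2 := by
      intro p
      have := le_ciSup (myBdd S κ hκ p.2) p.1
      rw [sup_formula S hS hSne κ hκ p.2] at this
      exact this
    calc ∫ p, F p ∂Q ≤ ∫ p, g p.2 ∂Q := integral_mono hFint hgsint hle
      _ = ∫ ξ', g ξ' ∂(Q.map Prod.snd) :=
          (integral_map measurable_snd.aemeasurable hgcont.measurable.aestronglyMeasurable).symm
      _ = ∫ ξ', g ξ' ∂(empirical ξhat) := by rw [hQmap]
      _ = Rhs := by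
          rw [empirical, integral_smul_measure, integral_finset_sum_measure
            (fun i _ => integrable_dirac_of_meas hgcont.measurable _)]
          simp only [integral_dirac' _ _ hgcont.measurable.stronglyMeasurable]
          rw [hRhs]
          simp only [smul_eq_mul, ENNReal.toReal_inv, ENNReal.toReal_natCast, one_div]
          congr 1
          exact Finset.sum_congr rfl fun i _ => (sup_formula S hS hSne κ hκ (ξhat i)).symm
  exact le_antisymm (csSup_le ⟨Rhs, hmem⟩ hub) (le_csSup ⟨Rhs, hub⟩ hmem)
end

section
/- Let P̄ be an n×n real positive semidefinite matrix, V an n×m real matrix, f̄ ∈ ℝ^m, and ξ̂ ∈ ℝ^n, and let S = {ξ ∈ ℝ^n : (ξ+Vf̄)ᵀ P̄ (ξ+Vf̄) ≤ 1} (which is nonempty since it contains −Vf̄). Then infDist(ξ̂, S) equals the supremum of u over all triples (π, p, u) ∈ ℝ_{≥0} × ℝ × ℝ satisfying the two matrix inequalities: (i) the (n+1)×(n+1) block matrix [[I, −ξ̂],[−ξ̂ᵀ, ξ̂ᵀξ̂ − p]] + π·[[P̄, P̄Vf̄],[f̄ᵀVᵀP̄, f̄ᵀVᵀP̄Vf̄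 − 1]] is positive semidefinite, and (ii) the 2×2 matrix [[p, u],[u, 1]] is positive semidefinite; moreover this supremum is attained. -/
open Matrix Metric

/-- View a point of `ℝ^n` (with Euclidean norm) as a plain vector `Fin n → ℝ`. -/
def toVec {n : ℕ} (ξ : EuclideanSpace ℝ (Fin n)) : Fin n → ℝ := ξ

/-- The symmetric homogenization `[[A, b],[bᵀ, c]]` of a quadratic function. -/
def homMat {n : ℕ} (A : Matrix (Fin n) (Fin n) ℝ) (b : Fin n → ℝ) (c : ℝ) :
    Matrix (Fin n ⊕ Fin 1) (Fin n ⊕ Fin 1) ℝ :=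
  Matrix.fromBlocks A (Matrix.replicateCol (Fin 1) b) (Matrix.replicateRow (Fin 1) b) (Matrix.of fun _ _ => c)

section aux

variable {n : ℕ}

lemma dot_self_nonneg' (v : Fin n → ℝ) : 0 ≤ v ⬝ᵥ v :=
  Finset.sum_nonneg fun _ _ => mul_self_nonneg _

lemma dot_self_eq_zero' {v : Fin n → ℝ} (h : v ⬝ᵥ v ≤ 0) : v = 0 := by
  rw [← dotProduct_self_eq_zero (v := v)]
  exact le_antisymm h (dot_self_nonneg' v)

lemma psym {P : Matrix (Fin n) (Fin n) ℝ} (hP : P.IsHermitian) (a b : Fin n → ℝ) :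
    a ⬝ᵥ P *ᵥ b = b ⬝ᵥ P *ᵥ a := by
  have ht : Pᵀ = P := by rw [← conjTranspose_eq_transpose_of_trivial, hP.eq]
  rw [dotProduct_mulVec a P b, ← ht, vecMul_transpose, dotProduct_comm, ht]

lemma quad_expand {P : Matrix (Fin n) (Fin n) ℝ} (hP : P.IsHermitian) (y z : Fin n → ℝ) (s : ℝ) :
    (y + s • z) ⬝ᵥ P *ᵥ (y + s • z)
      = y ⬝ᵥ P *ᵥ y + 2 * s * (z ⬝ᵥ P *ᵥ y) + s * s * (z ⬝ᵥ P *ᵥ z) := by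
  simp only [mulVec_add, mulVec_smul, dotProduct_add, add_dotProduct, dotProduct_smul,
    smul_dotProduct, smul_eq_mul, psym hP y z]
  ring

lemma dot_expand (y z : Fin n → ℝ) (s : ℝ) :
    (y - s • z) ⬝ᵥ (y - s • z) = y ⬝ᵥ y - 2 * s * (z ⬝ᵥ y) + s * s * (z ⬝ᵥ z) := by
  simp only [dotProduct_sub, sub_dotProduct, dotProduct_smul, smul_dotProduct, smul_eq_mul,
    dotProduct_comm y z]
  ring

lemma qform_homMat (A : Matrix (Fin n) (Fin n) ℝ) (b : Fin n → ℝ) (c : ℝ)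
    (v : Fin n ⊕ Fin 1 → ℝ) :
    v ⬝ᵥ (homMat A b c) *ᵥ v =
      (v ∘ Sum.inl) ⬝ᵥ A *ᵥ (v ∘ Sum.inl)
        + v (Sum.inr 0) * (b ⬝ᵥ (v ∘ Sum.inl))
        + ((v ∘ Sum.inl) ⬝ᵥ b) * v (Sum.inr 0)
        + c * (v (Sum.inr 0) * v (Sum.inr 0)) := by
  have hv : v = Sum.elim (v ∘ Sum.inl) (v ∘ Sum.inr) := (Sum.elim_comp_inl_inr v).symm
  rw [homMat]
  conv_lhs => rw [hv]
  rw [fromBlocks_mulVec]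
  simp only [Sum.elim_comp_inl, Sum.elim_comp_inr]
  rw [dotProduct_block]
  simp only [Sum.elim_comp_inl, Sum.elim_comp_inr]
  have h1 : (Matrix.replicateCol (Fin 1) b) *ᵥ (v ∘ Sum.inr) = fun i => b i * v (Sum.inr 0) := by
    ext i; simp [Matrix.mulVec, dotProduct, Matrix.replicateCol]
  have h2 : (Matrix.replicateRow (Fin 1) b) *ᵥ (v ∘ Sum.inl) = fun _ => b ⬝ᵥ (v ∘ Sum.inl) := by
    ext i; simp [Matrix.mulVec, dotProduct, Matrix.replicateRow]
  have h3 : (Matrix.of fun _ _ => c : Matrix (Fin 1) (Fin 1) ℝ) *ᵥ (v ∘ Sum.inr)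
      = fun _ => c * v (Sum.inr 0) := by
    ext i; simp [Matrix.mulVec, dotProduct]
  rw [h1, h2, h3]
  simp only [dotProduct_add, dotProduct, Pi.add_apply, Fin.sum_univ_one, Function.comp_apply]
  simp only [mul_add, Finset.sum_add_distrib, Finset.mul_sum, mul_left_comm, mul_comm]
  ring_nf
  rw [show ∑ x, b x * v (Sum.inl x) * v (Sum.inr 0) = ∑ x, v (Sum.inr 0) * b x * v (Sum.inl x) from
    Finset.sum_congr rfl fun _ _ => by ring]
  ring

lemma homMat_isHermitian {A : Matrix (Fin n) (Fin n) ℝ} (hA : A.IsHermitian)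
    (b : Fin n → ℝ) (c : ℝ) : (homMat A b c).IsHermitian := by
  unfold Matrix.IsHermitian homMat
  have hD : (Matrix.of fun _ _ => c : Matrix (Fin 1) (Fin 1) ℝ)ᴴ = Matrix.of fun _ _ => c := by
    ext i j; simp
  rw [fromBlocks_conjTranspose, conjTranspose_replicateCol, conjTranspose_replicateRow, star_trivial, hA.eq, hD]

/-- distance squared in Euclidean space as a dot product -/
lemma dist_sq_eq (ξ ζ : EuclideanSpace ℝ (Fin n)) :
    dist ξ ζ * dist ξ ζ = (toVec ξ - toVec ζ) ⬝ᵥ (toVec ξ - toVec ζ) := by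
  rw [EuclideanSpace.dist_eq, Real.mul_self_sqrt (Finset.sum_nonneg fun _ _ => sq_nonneg _)]
  simp [dotProduct, toVec, sq, Real.dist_eq, abs_mul_abs_self]

end aux

set_option maxHeartbeats 1000000 in
/-- Lemma 2 of the paper: the minimum Euclidean distance from `ξ̂` to the ellipsoidal set
`S = {ξ : (ξ + V f̄)ᵀ P̄ (ξ + V f̄) ≤ 1}` is the optimal value of the SDP (14), and this
optimal value is attained. -/
theorem infDist_isGreatest_SDP {n m : ℕ}
    (P : Matrix (Fin n) (Fin n) ℝ) (hP : P.PosSemidef)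
    (V : Matrix (Fin n) (Fin m) ℝ) (f : Fin m → ℝ) (ξhat : EuclideanSpace ℝ (Fin n)) :
    IsGreatest
      { u : ℝ | ∃ π p : ℝ, 0 ≤ π ∧
        (homMat (1 : Matrix (Fin n) (Fin n) ℝ) (-(toVec ξhat))
            (toVec ξhat ⬝ᵥ toVec ξhat - p)
          + π • homMat P (P.mulVec (V.mulVec f))
              ((V.mulVec f) ⬝ᵥ P.mulVec (V.mulVec f) - 1)).PosSemidef ∧
        (!![p, u; u, 1]).PosSemidef }
      (infDist ξhat { ξ : EuclideanSpace ℝ (Fin n) |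
        (toVec ξ + V.mulVec f) ⬝ᵥ P.mulVec (toVec ξ + V.mulVec f) ≤ 1 }) := by
  classical
  set vf : Fin n → ℝ := V.mulVec f with hvf
  set S : Set (EuclideanSpace ℝ (Fin n)) :=
    { ξ : EuclideanSpace ℝ (Fin n) | (toVec ξ + vf) ⬝ᵥ P.mulVec (toVec ξ + vf) ≤ 1 } with hS
  set xh : Fin n → ℝ := toVec ξhat with hxhat
  set d : ℝ := infDist ξhat S with hd
  have hdnn : 0 ≤ d := infDist_nonneg
  have toE_toVec : ∀ y : Fin n → ℝ,
      toVec ((EuclideanSpace.equiv (Fin n) ℝ).symm y) = y := fun _ => rfl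
  set toE : (Fin n → ℝ) → EuclideanSpace ℝ (Fin n) :=
    fun y => (EuclideanSpace.equiv (Fin n) ℝ).symm y with htoE
  have hmem_iff : ∀ y : Fin n → ℝ, toE y ∈ S ↔ (y + vf) ⬝ᵥ P *ᵥ (y + vf) ≤ 1 := by
    intro y; rw [hS]; exact Iff.rfl
  have hne : S.Nonempty := by
    refine ⟨toE (-vf), ?_⟩
    rw [hmem_iff]
    simp
  -- quadratic form of the LMI matrix
  have qform_main : ∀ (π p : ℝ) (v : Fin n ⊕ Fin 1 → ℝ),
      v ⬝ᵥ (homMat (1 : Matrix (Fin n) (Fin n) ℝ) (-xh) (xh ⬝ᵥ xh - p)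
          + π • homMat P (P *ᵥ vf) (vf ⬝ᵥ P *ᵥ vf - 1)) *ᵥ v
        = ((v ∘ Sum.inl) - v (Sum.inr 0) • xh) ⬝ᵥ ((v ∘ Sum.inl) - v (Sum.inr 0) • xh)
            - p * (v (Sum.inr 0) * v (Sum.inr 0))
          + π * (((v ∘ Sum.inl) + v (Sum.inr 0) • vf) ⬝ᵥ
                  P *ᵥ ((v ∘ Sum.inl) + v (Sum.inr 0) • vf)
                - v (Sum.inr 0) * v (Sum.inr 0)) := by
    intro π p v
    rw [add_mulVec, dotProduct_add, smul_mulVec, dotProduct_smul,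
      qform_homMat, qform_homMat]
    set x : Fin n → ℝ := v ∘ Sum.inl
    set t : ℝ := v (Sum.inr 0)
    have h1 : vf ⬝ᵥ P *ᵥ x = x ⬝ᵥ P *ᵥ vf := psym hP.1 vf x
    simp only [one_mulVec, dotProduct_sub, sub_dotProduct, dotProduct_add, add_dotProduct,
      dotProduct_smul, smul_dotProduct, mulVec_add, mulVec_smul, dotProduct_neg, neg_dotProduct,
      smul_eq_mul, dotProduct_comm xh x, dotProduct_comm (P *ᵥ vf) x, h1]
    ring
  have hermM : ∀ π p : ℝ,
      (homMat (1 : Matrix (Fin n) (Fin n) ℝ) (-xh) (xh ⬝ᵥ xh - p)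
        + π • homMat P (P *ᵥ vf) (vf ⬝ᵥ P *ᵥ vf - 1)).IsHermitian := by
    intro π p
    have h2' : (π • homMat P (P *ᵥ vf) (vf ⬝ᵥ P *ᵥ vf - 1)).IsHermitian := by
      unfold Matrix.IsHermitian
      rw [conjTranspose_smul, star_trivial, (homMat_isHermitian hP.1 _ _).eq]
    exact (homMat_isHermitian Matrix.isHermitian_one _ _).add h2'
  have h22 : (!![d * d, d; d, 1]).PosSemidef := by
    refine Matrix.PosSemidef.of_dotProduct_mulVec_nonneg ?_ ?_
    · ext i j
      fin_cases i <;> fin_cases j <;> simp [Matrix.conjTranspose_apply]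
    · intro v
      rw [star_trivial]
      have hv : v ⬝ᵥ (!![d * d, d; d, 1]) *ᵥ v = (d * v 0 + v 1) * (d * v 0 + v 1) := by
        simp [Matrix.mulVec, dotProduct, Fin.sum_univ_two]
        ring
      rw [hv]
      exact mul_self_nonneg _
  have hdistE : ∀ y : Fin n → ℝ, (y + vf) ⬝ᵥ P *ᵥ (y + vf) ≤ 1 →
      d * d ≤ (xh - y) ⬝ᵥ (xh - y) := by
    intro y hy
    have h1 : toE y ∈ S := (hmem_iff y).mpr hy
    have h2 : d ≤ dist ξhat (toE y) := infDist_le_dist_of_mem h1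
    have h3 : dist ξhat (toE y) * dist ξhat (toE y) = (xh - y) ⬝ᵥ (xh - y) :=
      dist_sq_eq ξhat (toE y)
    nlinarith [dist_nonneg (x := ξhat) (y := toE y)]
  constructor
  · -- membership
    by_cases hmemS : ξhat ∈ S
    · have hd0 : d = 0 := infDist_zero_of_mem hmemS
      refine ⟨0, d * d, le_refl 0, Matrix.PosSemidef.of_dotProduct_mulVec_nonneg (hermM 0 (d * d)) ?_, h22⟩
      intro v
      rw [star_trivial, qform_main 0 (d * d) v, hd0]
      have := dot_self_nonneg' (v ∘ Sum.inl - v (Sum.inr 0) • xh)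
      nlinarith [this]
    · -- ξhat outside S : use the projection
      have hgc : Continuous fun y : Fin n → ℝ => (y + vf) ⬝ᵥ P *ᵥ (y + vf) := by
        simp only [dotProduct, Matrix.mulVec, Pi.add_apply]
        refine continuous_finset_sum _ fun i _ => Continuous.mul ?_ ?_
        · exact (continuous_apply i).add continuous_const
        · exact continuous_finset_sum _ fun j _ =>
            continuous_const.mul ((continuous_apply j).add continuous_const)
      have hcont : Continuous fun ξ : EuclideanSpace ℝ (Fin n) =>
          (toVec ξ + vf) ⬝ᵥ P *ᵥ (toVec ξ + vf) :=
        hgc.comp (PiLp.continuous_ofLp (p := 2) (β := fun _ : Fin n => ℝ))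
      have hScl : IsClosed S := isClosed_Iic.preimage hcont
      obtain ⟨ξs, hξsS, hd_eq⟩ := hScl.exists_infDist_eq_dist hne ξhat
      set xs : Fin n → ℝ := toVec ξs with hxs
      set u0 : Fin n → ℝ := xh - xs with hu0def
      have hd2 : d * d = u0 ⬝ᵥ u0 := by
        rw [hd, hd_eq, dist_sq_eq]
      have hdpos : 0 < d := by
        rcases lt_or_eq_of_le hdnn with h | h
        · exact h
        · exfalso
          apply hmemS
          have h0 : dist ξhat ξs = 0 := by rw [← hd_eq, ← hd, ← h]
          rw [dist_eq_zero] at h0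
          rwa [h0]
      have hgle : (xs + vf) ⬝ᵥ P *ᵥ (xs + vf) ≤ 1 := hξsS
      -- Step A : the projection lies on the boundary
      have hgs : (xs + vf) ⬝ᵥ P *ᵥ (xs + vf) = 1 := by
        by_contra hne1
        have hlt : (xs + vf) ⬝ᵥ P *ᵥ (xs + vf) < 1 := lt_of_le_of_ne hgle hne1
        have hu0P : 0 ≤ u0 ⬝ᵥ P *ᵥ u0 := by simpa [star_trivial] using hP.dotProduct_mulVec_nonneg u0
        set g0 : ℝ := (xs + vf) ⬝ᵥ P *ᵥ (xs + vf) with hg0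
        set B : ℝ := |2 * (u0 ⬝ᵥ P *ᵥ (xs + vf))| + u0 ⬝ᵥ P *ᵥ u0 + 1 with hB
        have hBpos : 0 < B := by
          have := abs_nonneg (2 * (u0 ⬝ᵥ P *ᵥ (xs + vf)))
          rw [hB]; linarith
        set s : ℝ := min 1 ((1 - g0) / B) with hsdef
        have hs0 : 0 < s := lt_min one_pos (div_pos (by rw [hg0]; linarith) hBpos)
        have hs1 : s ≤ 1 := min_le_left _ _
        have hsB : s * B ≤ 1 - g0 := by
          calc s * B ≤ ((1 - g0) / B) * B :=
                mul_le_mul_of_nonneg_right (min_le_right _ _) (le_of_lt hBpos)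
            _ = 1 - g0 := by field_simp
        have hac : xs + s • u0 + vf = (xs + vf) + s • u0 := by
          ext i; simp only [Pi.add_apply, Pi.smul_apply, Pi.sub_apply, smul_eq_mul]; ring
        have hgy : (xs + s • u0 + vf) ⬝ᵥ P *ᵥ (xs + s • u0 + vf) ≤ 1 := by
          rw [hac, quad_expand hP.1 (xs + vf) u0 s]
          have h1 : 2 * s * (u0 ⬝ᵥ P *ᵥ (xs + vf)) ≤ s * |2 * (u0 ⬝ᵥ P *ᵥ (xs + vf))| := by
            rw [mul_comm 2 s, mul_assoc]
            exact mul_le_mul_of_nonneg_left (le_abs_self _) (le_of_lt hs0)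
          have h2 : s * s * (u0 ⬝ᵥ P *ᵥ u0) ≤ s * (u0 ⬝ᵥ P *ᵥ u0) := by
            nlinarith [mul_nonneg (mul_nonneg hs0.le (sub_nonneg.mpr hs1)) hu0P]
          rw [hB] at hsB
          rw [← hg0]
          nlinarith [hsB, h1, h2, hs0]
        have hdy := hdistE _ hgy
        have hxy : xh - (xs + s • u0) = u0 - s • u0 := by
          rw [hu0def]; ext i
          simp only [Pi.add_apply, Pi.sub_apply, Pi.smul_apply, smul_eq_mul]; ring
        rw [hxy, dot_expand] at hdy
        nlinarith [hd2, hs0, hs1, hdpos, hdy,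
          mul_nonneg (mul_nonneg (sub_nonneg.mpr hs1) hs0.le) (mul_pos hdpos hdpos).le,
          mul_pos hs0 (mul_pos hdpos hdpos)]
      -- Step B : variational inequality
      have hstepB : ∀ v : Fin n → ℝ, v ⬝ᵥ P *ᵥ (xs + vf) < 0 → v ⬝ᵥ u0 ≤ 0 := by
        intro v hva
        by_contra hcon
        push_neg at hcon
        have hvv : 0 < v ⬝ᵥ v := by
          rcases lt_or_eq_of_le (dot_self_nonneg' v) with h | h
          · exact h
          · exfalso
            have : v = 0 := dot_self_eq_zero' (le_of_eq h.symm)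
            rw [this, zero_dotProduct] at hcon
            exact lt_irrefl 0 hcon
        have hvP : 0 ≤ v ⬝ᵥ P *ᵥ v := by simpa [star_trivial] using hP.dotProduct_mulVec_nonneg v
        set s1 : ℝ := (-(2 * (v ⬝ᵥ P *ᵥ (xs + vf)))) / (v ⬝ᵥ P *ᵥ v + 1) with hs1def
        have hs1pos : 0 < s1 := div_pos (by linarith) (by linarith)
        set s : ℝ := min s1 ((v ⬝ᵥ u0) / (v ⬝ᵥ v)) with hsdef
        have hs0 : 0 < s := lt_min hs1pos (div_pos hcon hvv)
        have hss1 : s ≤ s1 := min_le_left _ _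
        have hsden : s * (v ⬝ᵥ P *ᵥ v + 1) ≤ -(2 * (v ⬝ᵥ P *ᵥ (xs + vf))) := by
          calc s * (v ⬝ᵥ P *ᵥ v + 1) ≤ s1 * (v ⬝ᵥ P *ᵥ v + 1) :=
              mul_le_mul_of_nonneg_right hss1 (by linarith)
            _ = -(2 * (v ⬝ᵥ P *ᵥ (xs + vf))) := by rw [hs1def]; field_simp
        have hgy : (xs + s • v + vf) ⬝ᵥ P *ᵥ (xs + s • v + vf) ≤ 1 := by
          have hac : xs + s • v + vf = (xs + vf) + s • v := by
            ext i; simp only [Pi.add_apply, Pi.smul_apply, smul_eq_mul]; ring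
          rw [hac, quad_expand hP.1 (xs + vf) v s, hgs]
          nlinarith [hsden, hs0, hvP, mul_le_mul_of_nonneg_left hsden hs0.le]
        have hdy := hdistE _ hgy
        have hxy : xh - (xs + s • v) = u0 - s • v := by
          rw [hu0def]; ext i
          simp only [Pi.add_apply, Pi.sub_apply, Pi.smul_apply, smul_eq_mul]; ring
        rw [hxy, dot_expand] at hdy
        have hs2 : s ≤ (v ⬝ᵥ u0) / (v ⬝ᵥ v) := min_le_right _ _
        have hs3 : s * (v ⬝ᵥ v) ≤ v ⬝ᵥ u0 := by
          calc s * (v ⬝ᵥ v) ≤ ((v ⬝ᵥ u0) / (v ⬝ᵥ v)) * (v ⬝ᵥ v) :=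
              mul_le_mul_of_nonneg_right hs2 (le_of_lt hvv)
            _ = v ⬝ᵥ u0 := by field_simp
        nlinarith [hd2, hdy, hs3, hs0, hcon, mul_pos hs0 hcon,
          mul_le_mul_of_nonneg_left hs3 hs0.le]
      -- Step C : a ≠ 0 and the closed version of the variational inequality
      have hgsa : (xs + vf) ⬝ᵥ P *ᵥ (xs + vf) = 1 := hgs
      have haa : 0 < (P *ᵥ (xs + vf)) ⬝ᵥ (P *ᵥ (xs + vf)) := by
        rcases lt_or_eq_of_le (dot_self_nonneg' (P *ᵥ (xs + vf))) with h | h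
        · exact h
        · exfalso
          have h0 : P *ᵥ (xs + vf) = 0 := dot_self_eq_zero' (le_of_eq h.symm)
          rw [h0, dotProduct_zero] at hgsa
          exact one_ne_zero hgsa.symm
      have hau : 0 ≤ (P *ᵥ (xs + vf)) ⬝ᵥ u0 := by
        have := hstepB (-(P *ᵥ (xs + vf))) (by
          rw [neg_dotProduct]
          linarith)
        rw [neg_dotProduct] at this
        linarith
      have hstepC : ∀ v : Fin n → ℝ, v ⬝ᵥ P *ᵥ (xs + vf) ≤ 0 → v ⬝ᵥ u0 ≤ 0 := by
        intro v hva
        by_contra hcon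
        push_neg at hcon
        have key : ∀ ε : ℝ, 0 < ε → v ⬝ᵥ u0 ≤ ε * ((P *ᵥ (xs + vf)) ⬝ᵥ u0) := by
          intro ε hε
          have h1 : (v - ε • (P *ᵥ (xs + vf))) ⬝ᵥ P *ᵥ (xs + vf) < 0 := by
            rw [sub_dotProduct, smul_dotProduct, smul_eq_mul]
            have : (P *ᵥ (xs + vf)) ⬝ᵥ P *ᵥ (xs + vf)
                = (P *ᵥ (xs + vf)) ⬝ᵥ (P *ᵥ (xs + vf)) := rfl
            nlinarith [mul_pos hε haa, hva]
          have h2 := hstepB _ h1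
          rw [sub_dotProduct, smul_dotProduct, smul_eq_mul] at h2
          linarith
        have hd0 := key ((v ⬝ᵥ u0) / (2 * ((P *ᵥ (xs + vf)) ⬝ᵥ u0) + 1))
          (div_pos hcon (by linarith))
        rw [div_mul_eq_mul_div, le_div_iff₀ (by linarith)] at hd0
        nlinarith [hd0, hcon, hau, mul_nonneg hcon.le hau]
      -- Step D : the KKT multiplier
      set lam : ℝ := (u0 ⬝ᵥ (P *ᵥ (xs + vf))) / ((P *ᵥ (xs + vf)) ⬝ᵥ (P *ᵥ (xs + vf)))
        with hlamdef
      have hua : u0 ⬝ᵥ (P *ᵥ (xs + vf)) = (P *ᵥ (xs + vf)) ⬝ᵥ u0 := dotProduct_comm _ _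
      have hlam : 0 ≤ lam := div_nonneg (by rw [hua]; exact hau) haa.le
      have hw : u0 - lam • (P *ᵥ (xs + vf)) = 0 := by
        apply dot_self_eq_zero'
        have hwa : (u0 - lam • (P *ᵥ (xs + vf))) ⬝ᵥ (P *ᵥ (xs + vf)) = 0 := by
          rw [sub_dotProduct, smul_dotProduct, smul_eq_mul, hlamdef,
            div_mul_cancel₀ _ haa.ne', sub_self]
        have hwu := hstepC _ (le_of_eq hwa)
        have hexpand : (u0 - lam • (P *ᵥ (xs + vf))) ⬝ᵥ (u0 - lam • (P *ᵥ (xs + vf)))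
            = (u0 - lam • (P *ᵥ (xs + vf))) ⬝ᵥ u0
              - lam * ((u0 - lam • (P *ᵥ (xs + vf))) ⬝ᵥ (P *ᵥ (xs + vf))) := by
          rw [dotProduct_sub, dotProduct_smul, smul_eq_mul]
        rw [hexpand, hwa, mul_zero, sub_zero]
        exact hwu
      have hu0lam : u0 = lam • (P *ᵥ (xs + vf)) := sub_eq_zero.mp hw
      have hxh_eq : xh = xs + lam • (P *ᵥ (xs + vf)) := by
        have h := hu0lam
        rw [hu0def] at h
        exact sub_eq_iff_eq_add'.mp h
      have hgs' : xs ⬝ᵥ P *ᵥ xs + 2 * (xs ⬝ᵥ P *ᵥ vf) + vf ⬝ᵥ P *ᵥ vf = 1 := by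
        have h := hgs
        simp only [mulVec_add, dotProduct_add, add_dotProduct] at h
        rw [psym hP.1 vf xs] at h
        linarith
      have hdlam : d * d = lam * lam * ((P *ᵥ (xs + vf)) ⬝ᵥ (P *ᵥ (xs + vf))) := by
        rw [hd2, hu0lam, smul_dotProduct, dotProduct_smul, smul_eq_mul, smul_eq_mul]
        ring
      -- Step E : assemble the certificate
      refine ⟨lam, d * d, hlam, Matrix.PosSemidef.of_dotProduct_mulVec_nonneg (hermM lam (d * d)) ?_, h22⟩
      intro v
      rw [star_trivial, qform_main lam (d * d) v]
      set x : Fin n → ℝ := v ∘ Sum.inl with hxv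
      set t : ℝ := v (Sum.inr 0) with htv
      have hzP : 0 ≤ (x - t • xs) ⬝ᵥ P *ᵥ (x - t • xs) := by
        simpa [star_trivial] using hP.dotProduct_mulVec_nonneg (x - t • xs)
      have hzz : 0 ≤ (x - t • xs) ⬝ᵥ (x - t • xs) := dot_self_nonneg' _
      have hkey : (x - t • xh) ⬝ᵥ (x - t • xh) - d * d * (t * t)
            + lam * ((x + t • vf) ⬝ᵥ P *ᵥ (x + t • vf) - t * t)
          = (x - t • xs) ⬝ᵥ (x - t • xs) + lam * ((x - t • xs) ⬝ᵥ P *ᵥ (x - t • xs)) := by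
        rw [hxh_eq, hdlam]
        simp only [mulVec_add, mulVec_smul, mulVec_sub, dotProduct_add, add_dotProduct,
          dotProduct_sub, sub_dotProduct, dotProduct_smul, smul_dotProduct, smul_eq_mul]
        simp only [psym hP.1 xs x, psym hP.1 vf x, psym hP.1 vf xs,
          dotProduct_comm (P *ᵥ xs) x, dotProduct_comm (P *ᵥ vf) x,
          dotProduct_comm (P *ᵥ xs) xs, dotProduct_comm (P *ᵥ vf) xs,
          dotProduct_comm (P *ᵥ vf) (P *ᵥ xs), dotProduct_comm xs x]
        linear_combination (lam * (t * t)) * hgs'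
      rw [hkey]
      nlinarith [hzP, hzz, hlam, mul_nonneg hlam hzP]
  · -- upper bound
    rintro u ⟨π, p, hπ, hM, h2⟩
    by_contra hcon
    push_neg at hcon
    obtain ⟨ξ, hξS, hξd⟩ := (infDist_lt_iff hne).mp hcon
    have hpu : u * u ≤ p := by
      have := h2.dotProduct_mulVec_nonneg ![1, -u]
      simp only [star_trivial] at this
      simp [Matrix.mulVec, dotProduct, Fin.sum_univ_two] at this
      nlinarith [this]
    have hq := hM.dotProduct_mulVec_nonneg (Sum.elim (toVec ξ) 1)
    rw [star_trivial, qform_main] at hq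
    simp only [Sum.elim_comp_inl, Sum.elim_inr, Pi.one_apply, one_smul, one_mul, mul_one] at hq
    have hgS : (toVec ξ + vf) ⬝ᵥ P *ᵥ (toVec ξ + vf) ≤ 1 := hξS
    have hdist : dist ξhat ξ * dist ξhat ξ = (toVec ξ - xh) ⬝ᵥ (toVec ξ - xh) := by
      rw [dist_comm, dist_sq_eq]
    have hdd : d ≤ dist ξhat ξ := infDist_le_dist_of_mem hξS
    nlinarith [dist_nonneg (x := ξhat) (y := ξ), hq, hπ, hgS, hpu, hξd, hdnn]
end

section
/- Let P̄ be an n×n real positive semidefinite matrix, V an n×m real matrix, f̄ ∈ ℝ^m, and ξ̂ ∈ ℝ^n. Suppose π ≥ 0 and p, u ∈ ℝ are such that (i) the (n+1)×(n+1) block matrix [[I, −ξ̂],[−ξ̂ᵀ, ξ̂ᵀξ̂ − p]] + π·[[P̄, P̄Vf̄],[f̄ᵀVᵀP̄, f̄ᵀVᵀP̄Vf̄ − 1]] is positive semidefinite and (ii) the 2×2 matrix [[p, u],[u, 1]] is positive semidefinite. Then for every ξ ∈ ℝ^n with (ξ+Vf̄)ᵀ P̄ (ξ+Vf̄) ≤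 1, one has u ≤ ‖ξ − ξ̂‖. -/
open Matrix Metric

lemma homMat_quad {n : ℕ} (A : Matrix (Fin n) (Fin n) ℝ) (b : Fin n → ℝ) (c : ℝ)
    (x : Fin n → ℝ) :
    Sum.elim x (fun _ => (1:ℝ)) ⬝ᵥ (homMat A b c).mulVec (Sum.elim x (fun _ => 1)) =
      x ⬝ᵥ A.mulVec x + x ⬝ᵥ b + b ⬝ᵥ x + c := by
  simp [homMat, fromBlocks_mulVec, sumElim_dotProduct_sumElim, mulVec, dotProduct,
    Finset.sum_add_distrib, replicateRow_apply, replicateCol_apply]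
  simp only [mul_add, Finset.sum_add_distrib]; ring

/-- Weak-duality direction of Lemma 2 of the paper: any feasible point `(π, p, u)` of the
SDP (14) gives a lower bound `u ≤ ‖ξ - ξ̂‖` for every `ξ` in the ellipsoidal set
`{ξ : (ξ + V f̄)ᵀ P̄ (ξ + V f̄) ≤ 1}`. -/
theorem sdp_feasible_lower_bound {n m : ℕ}
    (P : Matrix (Fin n) (Fin n) ℝ) (hP : P.PosSemidef)
    (V : Matrix (Fin n) (Fin m) ℝ) (f : Fin m → ℝ) (ξhat : EuclideanSpace ℝ (Fin n))
    (π p u : ℝ) (hπ : 0 ≤ π)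
    (h1 : (homMat (1 : Matrix (Fin n) (Fin n) ℝ) (-(toVec ξhat))
            (toVec ξhat ⬝ᵥ toVec ξhat - p)
          + π • homMat P (P.mulVec (V.mulVec f))
              ((V.mulVec f) ⬝ᵥ P.mulVec (V.mulVec f) - 1)).PosSemidef)
    (h2 : (!![p, u; u, 1]).PosSemidef) :
    ∀ ξ : EuclideanSpace ℝ (Fin n),
      (toVec ξ + V.mulVec f) ⬝ᵥ P.mulVec (toVec ξ + V.mulVec f) ≤ 1 →
        u ≤ ‖ξ - ξhat‖ := by
  intro ξ hξ
  set x : Fin n → ℝ := toVec ξ with hx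
  set xh : Fin n → ℝ := toVec ξhat with hxh
  set w : Fin n → ℝ := V.mulVec f with hw
  -- quadratic form evaluation
  have hz := h1.dotProduct_mulVec_nonneg (Sum.elim x (fun _ => (1:ℝ)))
  rw [star_trivial, add_mulVec, smul_mulVec, dotProduct_add, dotProduct_smul,
    homMat_quad, homMat_quad] at hz
  -- symmetry of P
  have hPsym : Pᵀ = P := by
    have := hP.1; exact (Matrix.conjTranspose_eq_transpose_of_trivial P).symm.trans this
  have hsym : ∀ a c : Fin n → ℝ, a ⬝ᵥ P.mulVec c = c ⬝ᵥ P.mulVec a := by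
    intro a c
    rw [Matrix.dotProduct_mulVec, ← Matrix.mulVec_transpose, hPsym, dotProduct_comm]
  -- ellipsoid expansion
  have hell : x ⬝ᵥ P.mulVec x + x ⬝ᵥ P.mulVec w + P.mulVec w ⬝ᵥ x +
      (w ⬝ᵥ P.mulVec w - 1) = (x + w) ⬝ᵥ P.mulVec (x + w) - 1 := by
    rw [mulVec_add, dotProduct_add, add_dotProduct, add_dotProduct]
    have h1' : P.mulVec w ⬝ᵥ x = w ⬝ᵥ P.mulVec x := by
      rw [dotProduct_comm, hsym]
    rw [h1']; ring
  -- norm squared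
  have hnorm : ‖ξ - ξhat‖ ^ 2 = (x - xh) ⬝ᵥ (x - xh) := by
    rw [EuclideanSpace.norm_eq, Real.sq_sqrt (by positivity)]
    simp only [dotProduct, Real.norm_eq_abs, sq_abs]
    refine Finset.sum_congr rfl fun i _ => ?_
    show (ξ i - ξhat i) ^ 2 = (ξ i - ξhat i) * (ξ i - ξhat i)
    ring
  have key : p ≤ ‖ξ - ξhat‖ ^ 2 := by
    have hq2 : (x + w) ⬝ᵥ P.mulVec (x + w) - 1 ≤ 0 := by
      have := hξ; linarith
    have hπq : π * (x ⬝ᵥ P.mulVec x + x ⬝ᵥ P.mulVec w + P.mulVec w ⬝ᵥ x +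
        (w ⬝ᵥ P.mulVec w - 1)) ≤ 0 := by
      rw [hell]; exact mul_nonpos_of_nonneg_of_nonpos hπ hq2
    have hq1 : x ⬝ᵥ (1 : Matrix (Fin n) (Fin n) ℝ).mulVec x + x ⬝ᵥ (-xh) + (-xh) ⬝ᵥ x +
        (xh ⬝ᵥ xh - p) = (x - xh) ⬝ᵥ (x - xh) - p := by
      rw [Matrix.one_mulVec]
      simp only [dotProduct_neg, neg_dotProduct, dotProduct_sub, sub_dotProduct]
      rw [dotProduct_comm xh x]; ring
    rw [hnorm]
    simp only [smul_eq_mul] at hz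
    rw [hq1] at hz
    linarith
  -- from h2 : u^2 ≤ p
  have hu2 : u ^ 2 ≤ p := by
    have := h2.dotProduct_mulVec_nonneg ![1, -u]
    rw [star_trivial] at this
    simp [Matrix.mulVec, dotProduct, Fin.sum_univ_two] at this
    nlinarith [this]
  nlinarith [norm_nonneg (ξ - ξhat), key, hu2]
end

section
/- Let A, B be symmetric n×n real matrices, a, b ∈ ℝ^n, and c, d ∈ ℝ, and define the quadratic functions f(x) = xᵀAx + 2aᵀx + c and g(x) = xᵀBx + 2bᵀx + d on ℝ^n. Assume there exists x₀ ∈ ℝ^n with g(x₀) < 0 (Slater condition). Then the implication 'for all x ∈ ℝ^n, g(x) ≤ 0 implies f(x) ≥ 0' holds if and only if there exists π ≥ 0 such that the (n+1)×(n+1) block matrix [[A + πB, a + πb],[(a + πb)ᵀ, c + πd]] is positive semidefinite. -/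
open Matrix

noncomputable section
namespace SLemmaAux
variable {m : Type*} [Fintype m]

def qf (P : Matrix m m ℝ) (z : m → ℝ) : ℝ := z ⬝ᵥ P.mulVec z
def bf (P : Matrix m m ℝ) (u v : m → ℝ) : ℝ := u ⬝ᵥ P.mulVec v

lemma bf_symm {P : Matrix m m ℝ} (hP : P.IsSymm) (u v : m → ℝ) : bf P u v = bf P v u := by
  unfold bf
  rw [dotProduct_mulVec, ← mulVec_transpose, hP.eq, dotProduct_comm]

lemma qf_smul (P : Matrix m m ℝ) (c : ℝ) (z : m → ℝ) : qf P (c • z) = c^2 * qf P z := by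
  unfold qf
  rw [mulVec_smul, dotProduct_smul, smul_dotProduct]
  simp [smul_smul]; ring

lemma qf_combo {P : Matrix m m ℝ} (hP : P.IsSymm) (s t : ℝ) (u v : m → ℝ) :
    qf P (s • u + t • v) = s^2 * qf P u + 2*s*t*(bf P u v) + t^2 * qf P v := by
  have h := bf_symm hP u v
  unfold qf bf at *
  simp only [mulVec_add, dotProduct_add, add_dotProduct, mulVec_smul, dotProduct_smul,
    smul_dotProduct, smul_eq_mul]
  rw [show v ⬝ᵥ P.mulVec u = u ⬝ᵥ P.mulVec v from h.symm]
  ring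

lemma qf_matrix_add (P Q : Matrix m m ℝ) (z : m → ℝ) : qf (P + Q) z = qf P z + qf Q z := by
  unfold qf; rw [add_mulVec, dotProduct_add]

lemma qf_matrix_smul (c : ℝ) (P : Matrix m m ℝ) (z : m → ℝ) : qf (c • P) z = c * qf P z := by
  unfold qf; rw [smul_mulVec, dotProduct_smul]; simp

lemma qf_neg (P : Matrix m m ℝ) (z : m → ℝ) : qf P (-z) = qf P z := by
  have := qf_smul P (-1) z
  simpa using this


lemma dines_normalized_aux {P Q : Matrix m m ℝ} (hP : P.IsSymm) (hQ : Q.IsSymm)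
    {z1 z2 : m → ℝ} (h1 : qf P z1 = 1) (h2 : qf P z2 = 1)
    (h3 : qf Q z1 = 1) (h4 : qf Q z2 = -1) (hb : 0 ≤ bf P z1 z2)
    {s : ℝ} (hs : s ∈ Set.Icc (-1:ℝ) 1) :
    ∃ z, qf P z = 1 ∧ qf Q z = s := by
  set β := bf P z1 z2 with hβ
  set γ := bf Q z1 z2 with hγ
  set p : ℝ → ℝ := fun t => (1-t)^2 + 2*(1-t)*t*β + t^2 with hp
  set q : ℝ → ℝ := fun t => (1-t)^2 + 2*(1-t)*t*γ - t^2 with hq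
  have hqfp : ∀ t, qf P ((1-t) • z1 + t • z2) = p t := by
    intro t; rw [qf_combo hP, h1, h2]; simp only [hp]; ring
  have hqfq : ∀ t, qf Q ((1-t) • z1 + t • z2) = q t := by
    intro t; rw [qf_combo hQ, h3, h4]; simp only [hq]; ring
  have hppos : ∀ t ∈ Set.Icc (0:ℝ) 1, 0 < p t := by
    intro t ht
    have h1t : 0 ≤ 1 - t := by linarith [ht.2]
    have h2t : 0 ≤ t := ht.1
    have hmid : 0 ≤ 2*(1-t)*t*β := by positivity
    simp only [hp]
    nlinarith [sq_nonneg (1-2*t)]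
  set r : ℝ → ℝ := fun t => q t / p t with hr
  have hcont : ContinuousOn r (Set.Icc 0 1) := by
    apply ContinuousOn.div
    · fun_prop
    · fun_prop
    · intro t ht; exact ne_of_gt (hppos t ht)
  have hr0 : r 0 = 1 := by simp [hr, hq, hp]
  have hr1 : r 1 = -1 := by simp [hr, hq, hp]
  have hmem : s ∈ Set.Icc (r 1) (r 0) := by rw [hr0, hr1]; exact hs
  obtain ⟨t0, ht0, hrt0⟩ := intermediate_value_Icc' (by norm_num : (0:ℝ) ≤ 1) hcont hmem
  have hpt0 := hppos t0 ht0
  refine ⟨(Real.sqrt (p t0))⁻¹ • ((1-t0) • z1 + t0 • z2), ?_, ?_⟩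
  · rw [qf_smul, hqfp]
    rw [← Real.sqrt_inv]
    rw [Real.sq_sqrt (by positivity)]
    field_simp
  · rw [qf_smul, hqfq]
    rw [← Real.sqrt_inv]
    rw [Real.sq_sqrt (by positivity)]
    rw [← hrt0]
    simp [hr]
    ring

lemma dines_normalized {P Q : Matrix m m ℝ} (hP : P.IsSymm) (hQ : Q.IsSymm)
    {z1 z2 : m → ℝ} (h1 : qf P z1 = 1) (h2 : qf P z2 = 1)
    (h3 : qf Q z1 = 1) (h4 : qf Q z2 = -1)
    {s : ℝ} (hs : s ∈ Set.Icc (-1:ℝ) 1) :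
    ∃ z, qf P z = 1 ∧ qf Q z = s := by
  rcases le_or_gt 0 (bf P z1 z2) with hb | hb
  · exact dines_normalized_aux hP hQ h1 h2 h3 h4 hb hs
  · have h2' : qf P (-z2) = 1 := by rw [qf_neg]; exact h2
    have h4' : qf Q (-z2) = -1 := by rw [qf_neg]; exact h4
    have hb' : 0 ≤ bf P z1 (-z2) := by
      unfold bf at *
      rw [mulVec_neg, dotProduct_neg]
      linarith
    exact dines_normalized_aux hP hQ h1 h2' h3 h4' hb' hs


lemma two_by_two_unique {α β γ δ X Y X' Y' : ℝ} (hdet : α*δ - β*γ ≠ 0)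
    (e1 : α*X + β*Y = α*X' + β*Y') (e2 : γ*X + δ*Y = γ*X' + δ*Y') : X = X' ∧ Y = Y' := by
  constructor
  · have hX : (α*δ - β*γ) * X = (α*δ - β*γ) * X' := by linear_combination δ*e1 - β*e2
    exact mul_left_cancel₀ hdet hX
  · have hY : (α*δ - β*γ) * Y = (α*δ - β*γ) * Y' := by linear_combination α*e2 - γ*e1
    exact mul_left_cancel₀ hdet hY

theorem dines_convex {P Q : Matrix m m ℝ} (hP : P.IsSymm) (hQ : Q.IsSymm) :
    Convex ℝ {y : ℝ × ℝ | ∃ z : m → ℝ, y = (qf P z, qf Q z)} := by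
  rintro y1 ⟨z1, rfl⟩ y2 ⟨z2, rfl⟩ t1 t2 ht1 ht2 hsum
  set p1 := qf P z1; set q1 := qf Q z1; set p2 := qf P z2; set q2 := qf Q z2
  simp only [Set.mem_setOf_eq, Prod.smul_mk, smul_eq_mul, Prod.mk_add_mk]
  suffices h : ∃ z, qf P z = t1*p1 + t2*p2 ∧ qf Q z = t1*q1 + t2*q2 by
    obtain ⟨z, hz1, hz2⟩ := h
    exact ⟨z, by rw [hz1, hz2]⟩
  by_cases hD : p1*q2 - q1*p2 = 0
  · -- dependent case
    by_cases h10 : p1 = 0 ∧ q1 = 0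
    · refine ⟨Real.sqrt t2 • z2, ?_, ?_⟩
      · rw [qf_smul, Real.sq_sqrt ht2]
        show t2 * p2 = _
        rw [h10.1]; ring
      · rw [qf_smul, Real.sq_sqrt ht2]
        show t2 * q2 = _
        rw [h10.2]; ring
    · have hlam : ∃ lam : ℝ, p2 = lam * p1 ∧ q2 = lam * q1 := by
        by_cases hp1 : p1 = 0
        · have hq1 : q1 ≠ 0 := fun h => h10 ⟨hp1, h⟩
          refine ⟨q2 / q1, ?_, by field_simp⟩
          have hp2 : p2 = 0 := by
            have h2 : q1 * p2 = 0 := by rw [hp1] at hD; linarith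
            rcases mul_eq_zero.1 h2 with h | h
            · exact absurd h hq1
            · exact h
          rw [hp2, hp1]; ring
        · refine ⟨p2 / p1, by field_simp, ?_⟩
          field_simp
          linear_combination hD
      obtain ⟨lam, hl1, hl2⟩ := hlam
      rcases le_or_gt 0 (t1 + t2 * lam) with hmu | hmu
      · refine ⟨Real.sqrt (t1 + t2*lam) • z1, ?_, ?_⟩
        · rw [qf_smul, Real.sq_sqrt hmu]
          show _ * p1 = _
          rw [hl1]; ring
        · rw [qf_smul, Real.sq_sqrt hmu]
          show _ * q1 = _
          rw [hl2]; ring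
      · have hlneg : lam < 0 := by nlinarith
        have hln : lam ≠ 0 := ne_of_lt hlneg
        have hmul : 0 ≤ (t1 + t2*lam) / lam := by
          rw [div_nonneg_iff]
          right
          exact ⟨le_of_lt hmu, le_of_lt hlneg⟩
        refine ⟨Real.sqrt ((t1 + t2*lam)/lam) • z2, ?_, ?_⟩
        · rw [qf_smul, Real.sq_sqrt hmul]
          show _ * p2 = _
          rw [hl1]
          field_simp
        · rw [qf_smul, Real.sq_sqrt hmul]
          show _ * q2 = _
          rw [hl2]
          field_simp
  · -- independent case
    set α := (q2 - q1)/(p1*q2 - q1*p2) with hα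
    set β := (p1 - p2)/(p1*q2 - q1*p2) with hβ
    set γ := (q2 + q1)/(p1*q2 - q1*p2) with hγ
    set δ := (-p1 - p2)/(p1*q2 - q1*p2) with hδ
    have hD2 : q2*p1 - q1*p2 ≠ 0 := by intro h; apply hD; linarith
    set P' := α • P + β • Q with hP'
    set Q' := γ • P + δ • Q with hQ'
    have hP's : P'.IsSymm := (hP.smul α).add (hQ.smul β)
    have hQ's : Q'.IsSymm := (hP.smul γ).add (hQ.smul δ)
    have eqf : ∀ z, qf P' z = α * qf P z + β * qf Q z := fun z => by
      rw [hP', qf_matrix_add, qf_matrix_smul, qf_matrix_smul]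
    have eqg : ∀ z, qf Q' z = γ * qf P z + δ * qf Q z := fun z => by
      rw [hQ', qf_matrix_add, qf_matrix_smul, qf_matrix_smul]
    have h1 : qf P' z1 = 1 := by rw [eqf, hα, hβ]; field_simp; ring
    have h2 : qf P' z2 = 1 := by rw [eqf, hα, hβ]; field_simp; ring
    have h3 : qf Q' z1 = 1 := by rw [eqg, hγ, hδ]; field_simp; ring
    have h4 : qf Q' z2 = -1 := by rw [eqg, hγ, hδ]; field_simp; ring
    have hs : t1 - t2 ∈ Set.Icc (-1:ℝ) 1 := by constructor <;> linarith
    obtain ⟨z, hz1, hz2⟩ := dines_normalized hP's hQ's h1 h2 h3 h4 hs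
    rw [eqf] at hz1; rw [eqg] at hz2
    have ht1' : α * (t1*p1 + t2*p2) + β * (t1*q1 + t2*q2) = 1 := by
      rw [hα, hβ]; field_simp; linear_combination (p1*q2 - q1*p2) * hsum
    have ht2' : γ * (t1*p1 + t2*p2) + δ * (t1*q1 + t2*q2) = t1 - t2 := by
      rw [hγ, hδ]; field_simp; ring
    have hdet : α*δ - β*γ ≠ 0 := by
      have : α*δ - β*γ = -2/(p1*q2 - q1*p2) := by
        rw [hα, hβ, hγ, hδ]; field_simp; ring
      rw [this]
      exact div_ne_zero (by norm_num) hD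
    have e1 : α * qf P z + β * qf Q z = α * (t1*p1+t2*p2) + β * (t1*q1+t2*q2) :=
      hz1.trans ht1'.symm
    have e2 : γ * qf P z + δ * qf Q z = γ * (t1*p1+t2*p2) + δ * (t1*q1+t2*q2) :=
      hz2.trans ht2'.symm
    obtain ⟨hX, hY⟩ := two_by_two_unique hdet e1 e2
    exact ⟨z, hX, hY⟩


variable {n : ℕ}

lemma qf_homMat (A : Matrix (Fin n) (Fin n) ℝ) (a : Fin n → ℝ) (c : ℝ) (x : Fin n → ℝ) (s : ℝ) :
    qf (homMat A a c) (Sum.elim x fun _ => s) =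
      x ⬝ᵥ A.mulVec x + 2*(a ⬝ᵥ x)*s + c*s^2 := by
  unfold qf homMat
  rw [fromBlocks_mulVec]
  simp only [Sum.elim_comp_inl, Sum.elim_comp_inr]
  rw [sumElim_dotProduct_sumElim]
  simp [mulVec, dotProduct, Matrix.replicateCol, Matrix.replicateRow, Fin.sum_univ_one]
  simp only [mul_add, Finset.sum_add_distrib]
  have e2 : ∑ i, x i * (a i * s) = s * ∑ i, a i * x i := by
    rw [Finset.mul_sum]
    exact Finset.sum_congr rfl fun i _ => by ring
  rw [e2]
  ring

lemma vec_decomp (z : Fin n ⊕ Fin 1 → ℝ) :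
    z = Sum.elim (z ∘ Sum.inl) (fun _ => z (Sum.inr 0)) := by
  funext i
  cases i with
  | inl j => rfl
  | inr j => simp [Subsingleton.elim j 0]

lemma homMat_isSymm {A : Matrix (Fin n) (Fin n) ℝ} (hA : A.IsSymm) (a : Fin n → ℝ) (c : ℝ) :
    (homMat A a c).IsSymm := by
  unfold Matrix.IsSymm homMat
  rw [fromBlocks_transpose, transpose_replicateCol, transpose_replicateRow, hA.eq]
  congr 1

lemma homMat_add_smul (A B : Matrix (Fin n) (Fin n) ℝ) (a b : Fin n → ℝ) (c d : ℝ) (π : ℝ) :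
    homMat (A + π • B) (a + π • b) (c + π * d) = homMat A a c + π • homMat B b d := by
  unfold homMat
  ext i j
  rcases i with i | i <;> rcases j with j | j <;>
    simp [fromBlocks, Matrix.replicateCol, Matrix.replicateRow, Matrix.add_apply, Matrix.smul_apply, mul_comm]

lemma posSemidef_iff_qf {M : Matrix (Fin n ⊕ Fin 1) (Fin n ⊕ Fin 1) ℝ} (hM : M.IsSymm) :
    M.PosSemidef ↔ ∀ z, 0 ≤ qf M z := by
  constructor
  · intro h z
    simpa [qf] using (posSemidef_iff_dotProduct_mulVec.mp h).2 z
  · intro h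
    refine posSemidef_iff_dotProduct_mulVec.mpr ⟨hM, fun z => by simpa [qf] using h z⟩


lemma expand_quad {M : Matrix (Fin n) (Fin n) ℝ} (hM : M.IsSymm) (v : Fin n → ℝ) (e : ℝ)
    (x₀ x : Fin n → ℝ) (u : ℝ) :
    (x₀ + u • x) ⬝ᵥ M.mulVec (x₀ + u • x) + 2 * (v ⬝ᵥ (x₀ + u • x)) + e
      = (x₀ ⬝ᵥ M.mulVec x₀ + 2 * (v ⬝ᵥ x₀) + e)
        + 2*u*(bf M x₀ x + v ⬝ᵥ x) + u^2 * (x ⬝ᵥ M.mulVec x) := by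
  have h : qf M (x₀ + u • x) = qf M x₀ + 2*u*(bf M x₀ x) + u^2 * qf M x := by
    rw [show x₀ + u • x = (1:ℝ) • x₀ + u • x from by rw [one_smul]]
    rw [qf_combo hM]
    ring
  unfold qf at h
  rw [h, dotProduct_add, dotProduct_smul]
  simp only [smul_eq_mul]
  ring

lemma neg_at_large (qA LA f0 : ℝ) (hqA : qA < 0) :
    ∃ t : ℝ, 1 ≤ t ∧ f0 + 2*t*LA + t^2*qA < 0 := by
  set C := 2*|LA| + |f0| + 1 with hC
  refine ⟨max 1 (C / (-qA)), le_max_left _ _, ?_⟩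
  set t := max 1 (C / (-qA)) with ht
  have ht1 : 1 ≤ t := le_max_left _ _
  have ht0 : 0 ≤ t := by linarith
  have hqA' : 0 < -qA := by linarith
  have ht2 : C ≤ t * (-qA) := by
    have h := le_max_right 1 (C / (-qA))
    rw [div_le_iff₀ hqA'] at h
    rw [ht]
    exact h
  have h5 : t*LA ≤ t*|LA| := mul_le_mul_of_nonneg_left (le_abs_self LA) ht0
  have h6 : t*qA ≤ -C := by nlinarith
  have h8 : t*(t*qA) ≤ t*(-C) := mul_le_mul_of_nonneg_left h6 ht0
  have h9 : 1*|f0| ≤ t*|f0| := mul_le_mul_of_nonneg_right ht1 (abs_nonneg f0)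
  have h10 : t*(-C) = -2*(t*|LA|) - t*|f0| - t := by rw [hC]; ring
  have h11 : t^2*qA = t*(t*qA) := by ring
  nlinarith [le_abs_self f0]

lemma homogenize
    {A B : Matrix (Fin n) (Fin n) ℝ} (hA : A.IsSymm) (hB : B.IsSymm)
    {a b : Fin n → ℝ} {c d : ℝ}
    (hyp : ∀ x : Fin n → ℝ, x ⬝ᵥ B.mulVec x + 2 * (b ⬝ᵥ x) + d ≤ 0 →
        0 ≤ x ⬝ᵥ A.mulVec x + 2 * (a ⬝ᵥ x) + c)
    {x₀ : Fin n → ℝ} (hx₀ : x₀ ⬝ᵥ B.mulVec x₀ + 2 * (b ⬝ᵥ x₀) + d < 0)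
    (x : Fin n → ℝ) (s : ℝ)
    (hG : x ⬝ᵥ B.mulVec x + 2*(b ⬝ᵥ x)*s + d*s^2 ≤ 0) :
    0 ≤ x ⬝ᵥ A.mulVec x + 2*(a ⬝ᵥ x)*s + c*s^2 := by
  by_cases hs : s = 0
  · subst hs
    norm_num at hG ⊢
    by_contra hqA
    push_neg at hqA
    set LA := bf A x₀ x + a ⬝ᵥ x with hLA
    set LB := bf B x₀ x + b ⬝ᵥ x with hLB
    set ε : ℝ := if 0 ≤ LB then -1 else 1 with hε
    have hεsq : ε^2 = 1 := by rw [hε]; split_ifs <;> norm_num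
    have hεLB : ε * LB ≤ 0 := by
      rw [hε]; split_ifs with h
      · nlinarith
      · nlinarith
    obtain ⟨t, ht1, hneg⟩ :=
      neg_at_large (x ⬝ᵥ A.mulVec x) (ε*LA) (x₀ ⬝ᵥ A.mulVec x₀ + 2 * (a ⬝ᵥ x₀) + c) hqA
    have ht0 : (0:ℝ) ≤ t := by linarith
    have hgu : (x₀ + (ε*t) • x) ⬝ᵥ B.mulVec (x₀ + (ε*t) • x)
        + 2 * (b ⬝ᵥ (x₀ + (ε*t) • x)) + d ≤ 0 := by
      rw [expand_quad hB]
      rw [← hLB]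
      have h1 : (ε*t)^2 * (x ⬝ᵥ B.mulVec x) ≤ 0 :=
        mul_nonpos_iff.mpr (Or.inl ⟨sq_nonneg _, hG⟩)
      have h2 : 2*(ε*t)*LB ≤ 0 := by nlinarith [mul_nonneg ht0 (neg_nonneg.2 hεLB)]
      linarith
    have hcon := hyp _ hgu
    rw [expand_quad hA, ← hLA] at hcon
    rw [show ((ε*t)^2 : ℝ) = t^2 from by rw [mul_pow, hεsq, one_mul]] at hcon
    nlinarith [hcon, hneg]
  · have hs2 : (0:ℝ) < s⁻¹^2 := by positivity
    have key : ∀ (M : Matrix (Fin n) (Fin n) ℝ) (v : Fin n → ℝ) (e : ℝ),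
        (s⁻¹ • x) ⬝ᵥ M.mulVec (s⁻¹ • x) + 2 * (v ⬝ᵥ (s⁻¹ • x)) + e
          = s⁻¹^2 * (x ⬝ᵥ M.mulVec x + 2*(v ⬝ᵥ x)*s + e*s^2) := by
      intro M v e
      have h1 : (s⁻¹ • x) ⬝ᵥ M.mulVec (s⁻¹ • x) = s⁻¹^2 * (x ⬝ᵥ M.mulVec x) := qf_smul M s⁻¹ x
      rw [h1, dotProduct_smul]
      simp only [smul_eq_mul]
      field_simp
    have hg : (s⁻¹ • x) ⬝ᵥ B.mulVec (s⁻¹ • x) + 2 * (b ⬝ᵥ (s⁻¹ • x)) + d ≤ 0 := by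
      rw [key]
      have h2 := mul_nonneg (le_of_lt hs2) (neg_nonneg.2 hG)
      rw [mul_neg] at h2
      linarith
    have hf := hyp _ hg
    rw [key] at hf
    by_contra hF
    push_neg at hF
    nlinarith [mul_pos hs2 (neg_pos.mpr hF)]

end SLemmaAux
end

open SLemmaAux

/-- The S-procedure (S-lemma) for a single quadratic constraint in matrix form, under the
Slater condition: `(∀ x, g(x) ≤ 0 → f(x) ≥ 0)` iff there exists a multiplier `π ≥ 0` with
`[[A + πB, a + πb],[(a + πb)ᵀ, c + πd]] ⪰ 0`, where `f(x) = xᵀAx + 2aᵀx + c` and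
`g(x) = xᵀBx + 2bᵀx + d`. -/
theorem s_lemma {n : ℕ}
    (A B : Matrix (Fin n) (Fin n) ℝ) (hA : A.IsSymm) (hB : B.IsSymm)
    (a b : Fin n → ℝ) (c d : ℝ)
    (hSlater : ∃ x₀ : Fin n → ℝ, x₀ ⬝ᵥ B.mulVec x₀ + 2 * (b ⬝ᵥ x₀) + d < 0) :
    (∀ x : Fin n → ℝ, x ⬝ᵥ B.mulVec x + 2 * (b ⬝ᵥ x) + d ≤ 0 →
        0 ≤ x ⬝ᵥ A.mulVec x + 2 * (a ⬝ᵥ x) + c) ↔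
      ∃ π : ℝ, 0 ≤ π ∧ (homMat (A + π • B) (a + π • b) (c + π * d)).PosSemidef := by

  classical
  obtain ⟨x₀, hx₀⟩ := hSlater
  constructor
  · intro hyp
    set MF := homMat A a c with hMF
    set MG := homMat B b d with hMG
    have hMFs : MF.IsSymm := homMat_isSymm hA a c
    have hMGs : MG.IsSymm := homMat_isSymm hB b d
    have hqF : ∀ z : Fin n ⊕ Fin 1 → ℝ, qf MF z =
        (z ∘ Sum.inl) ⬝ᵥ A.mulVec (z ∘ Sum.inl) + 2*(a ⬝ᵥ (z ∘ Sum.inl))*(z (Sum.inr 0))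
          + c*(z (Sum.inr 0))^2 := by
      intro z
      conv_lhs => rw [vec_decomp z]
      exact qf_homMat A a c _ _
    have hqG : ∀ z : Fin n ⊕ Fin 1 → ℝ, qf MG z =
        (z ∘ Sum.inl) ⬝ᵥ B.mulVec (z ∘ Sum.inl) + 2*(b ⬝ᵥ (z ∘ Sum.inl))*(z (Sum.inr 0))
          + d*(z (Sum.inr 0))^2 := by
      intro z
      conv_lhs => rw [vec_decomp z]
      exact qf_homMat B b d _ _
    set S := {y : ℝ × ℝ | ∃ z : Fin n ⊕ Fin 1 → ℝ, y = (qf MF z, qf MG z)} with hS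
    have hSconv : Convex ℝ S := dines_convex hMFs hMGs
    set U : Set (ℝ × ℝ) := (Set.Iio 0) ×ˢ (Set.Iio 0) with hU
    have hUconv : Convex ℝ U := (convex_Iio 0).prod (convex_Iio 0)
    have hUopen : IsOpen U := IsOpen.prod isOpen_Iio isOpen_Iio
    have hdisj : Disjoint U S := by
      rw [Set.disjoint_left]
      rintro y hyU ⟨z, rfl⟩
      have hy1 : qf MF z < 0 := hyU.1
      have hy2 : qf MG z < 0 := hyU.2
      rw [hqG z] at hy2
      have h0 := homogenize hA hB hyp hx₀ (z ∘ Sum.inl) (z (Sum.inr 0)) (le_of_lt hy2)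
      rw [hqF z] at hy1
      linarith
    obtain ⟨f, u, hfU, hfS⟩ := geometric_hahn_banach_open hUconv hUopen hSconv hdisj
    obtain ⟨σ, hσdef⟩ : ∃ σ, f ((1:ℝ),(0:ℝ)) = σ := ⟨_, rfl⟩
    obtain ⟨π0, hπdef⟩ : ∃ π0, f ((0:ℝ),(1:ℝ)) = π0 := ⟨_, rfl⟩
    have hf_eq : ∀ p : ℝ × ℝ, f p = p.1 * σ + p.2 * π0 := by
      rintro ⟨p1, p2⟩
      rw [show ((p1, p2) : ℝ × ℝ) = p1 • ((1:ℝ),(0:ℝ)) + p2 • ((0:ℝ),(1:ℝ)) from by simp]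
      rw [map_add, _root_.map_smul, _root_.map_smul, hσdef, hπdef]
      simp [smul_eq_mul]
    have hu0 : u ≤ 0 := by
      have h0S : ((0:ℝ),(0:ℝ)) ∈ S := ⟨0, by simp [qf]⟩
      have h := hfS _ h0S
      rw [hf_eq] at h
      simpa using h
    have hUlt : ∀ p : ℝ × ℝ, p.1 < 0 → p.2 < 0 → p.1 * σ + p.2 * π0 < 0 := by
      intro p h1 h2
      have h := hfU p (by rw [hU, Set.mem_prod]; exact ⟨h1, h2⟩)
      rw [hf_eq] at h
      linarith
    have hσnn : 0 ≤ σ := by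
      by_contra hσ
      push_neg at hσ
      have hσne : σ ≠ 0 := ne_of_lt hσ
      have hT : (0:ℝ) < (|π0| + 1)/(-σ) := div_pos (by positivity) (by linarith)
      have h := hUlt (-((|π0| + 1)/(-σ)), -1) (by linarith) (by norm_num)
      simp only at h
      have he : -((|π0| + 1)/(-σ)) * σ = |π0| + 1 := by
        field_simp
      rw [he] at h
      have := le_abs_self π0
      linarith
    have hπnn : 0 ≤ π0 := by
      by_contra hπ
      push_neg at hπ
      have hπne : π0 ≠ 0 := ne_of_lt hπ
      have hT : (0:ℝ) < (|σ| + 1)/(-π0) := div_pos (by positivity) (by linarith)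
      have h := hUlt (-1, -((|σ| + 1)/(-π0))) (by norm_num) (by linarith)
      simp only at h
      have he : -((|σ| + 1)/(-π0)) * π0 = |σ| + 1 := by
        field_simp
      rw [he] at h
      have := le_abs_self σ
      linarith
    have hSnn : ∀ z : Fin n ⊕ Fin 1 → ℝ, 0 ≤ σ * qf MF z + π0 * qf MG z := by
      intro z
      by_contra hv
      push_neg at hv
      have hvne : σ * qf MF z + π0 * qf MG z < 0 := hv
      set μ := (|u| + 1)/(-(σ * qf MF z + π0 * qf MG z)) with hμdef
      have hμ : 0 ≤ μ := by
        apply div_nonneg (by positivity)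
        linarith
      have hmem : (qf MF (Real.sqrt μ • z), qf MG (Real.sqrt μ • z)) ∈ S := ⟨_, rfl⟩
      have h := hfS _ hmem
      rw [hf_eq] at h
      simp only at h
      rw [qf_smul, qf_smul, Real.sq_sqrt hμ] at h
      have hne : σ * qf MF z + π0 * qf MG z ≠ 0 := ne_of_lt hvne
      have hval : μ * (σ * qf MF z + π0 * qf MG z) = -(|u| + 1) := by
        rw [hμdef]
        field_simp
      nlinarith [neg_abs_le u, h, hval]
    have hσpos : 0 < σ := by
      rcases lt_or_eq_of_le hσnn with h | h
      · exact h
      · exfalso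
        have hπpos : 0 < π0 := by
          rcases lt_or_eq_of_le hπnn with h2 | h2
          · exact h2
          · exfalso
            have := hUlt (-1, -1) (by norm_num) (by norm_num)
            simp only at this
            rw [← h, ← h2] at this
            linarith
        have hzG : qf MG (Sum.elim x₀ fun _ => (1:ℝ)) < 0 := by
          rw [hMG, qf_homMat]
          nlinarith [hx₀]
        have := hSnn (Sum.elim x₀ fun _ => (1:ℝ))
        rw [← h] at this
        nlinarith [hzG, hπpos]
    refine ⟨π0/σ, div_nonneg hπnn (le_of_lt hσpos), ?_⟩
    rw [posSemidef_iff_qf (homMat_isSymm (hA.add (hB.smul (π0/σ))) _ _)]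
    intro z
    rw [homMat_add_smul, qf_matrix_add, qf_matrix_smul]
    have h := hSnn z
    have h2 : 0 ≤ (σ * qf MF z + π0 * qf MG z)/σ := div_nonneg h (le_of_lt hσpos)
    rw [show (σ * qf MF z + π0 * qf MG z)/σ = qf MF z + π0/σ * qf MG z from by
      field_simp] at h2
    exact h2
  · rintro ⟨π, hπ, hPSD⟩ x hg
    have h := (posSemidef_iff_qf (homMat_isSymm (hA.add (hB.smul π)) _ _)).mp hPSD
      (Sum.elim x fun _ => (1:ℝ))
    rw [qf_homMat] at h
    rw [add_mulVec, smul_mulVec, dotProduct_add, dotProduct_smul,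
      add_dotProduct, smul_dotProduct] at h
    simp only [smul_eq_mul] at h
    nlinarith [h, mul_nonneg hπ (neg_nonneg.2 hg)]
end

section
/- Let P̄ be an n×n real positive semidefinite matrix, V an n×m real matrix, f̄ ∈ ℝ^m, and ξ̂_1,…,ξ̂_N ∈ ℝ^n, and let S = {ξ ∈ ℝ^n : (ξ+Vf̄)ᵀ P̄ (ξ+Vf̄) ≤ 1}. Fix η > 0 and β ∈ (0,1). Then the relaxed distributionally robust chance constraint 'sup over Borel probability measures μ on ℝ^n with finite first moment of [μ(S) − (1/η)·d_W(μ, P̂_N)] ≤ 1 − β' holds if and only if (1/N)·∑_{i=1}^N max(η − infDist(ξ̂_i, S), 0) ≤ (1 − β)·η. -/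
open Matrix MeasureTheory Metric
open scoped ENNReal

section DiracHelpers

variable {α : Type*} [MeasurableSpace α] [MeasurableSingletonClass α]

lemma my_integrable_dirac (f : α → ℝ) (a : α) : Integrable f (Measure.dirac a) :=
  (integrable_const (f a)).congr (MeasureTheory.ae_eq_dirac f).symm

omit [MeasurableSingletonClass α] in
lemma dcomb_isProb {N : ℕ} (hN : 0 < N) (a : Fin N → α) :
    IsProbabilityMeasure ((N : ℝ≥0∞)⁻¹ • ∑ i : Fin N, Measure.dirac (a i)) := by
  constructor
  have h : (∑ i : Fin N, Measure.dirac (a i)) Set.univ = N := by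
    simp [Measure.coe_finset_sum, Finset.sum_apply]
  rw [Measure.smul_apply, h, smul_eq_mul,
    ENNReal.inv_mul_cancel (by exact_mod_cast hN.ne') (by simp)]

lemma dcomb_integrable {N : ℕ} (hN : 0 < N) (a : Fin N → α) (f : α → ℝ) :
    Integrable f ((N : ℝ≥0∞)⁻¹ • ∑ i : Fin N, Measure.dirac (a i)) :=
  (integrable_finset_sum_measure.2 fun i _ => my_integrable_dirac f (a i)).smul_measure
    (by simp [ENNReal.inv_ne_top, hN.ne'])

lemma dcomb_integral {N : ℕ} (a : Fin N → α) (f : α → ℝ) :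
    ∫ x, f x ∂((N : ℝ≥0∞)⁻¹ • ∑ i : Fin N, Measure.dirac (a i))
      = (N : ℝ)⁻¹ * ∑ i : Fin N, f (a i) := by
  rw [integral_smul_measure,
    integral_finset_sum_measure (fun i _ => my_integrable_dirac f (a i))]
  simp [integral_dirac, smul_eq_mul]

lemma dcomb_map {β : Type*} [MeasurableSpace β] [MeasurableSingletonClass β]
    {N : ℕ} (a : Fin N → α) {g : α → β} (hg : Measurable g) :
    ((N : ℝ≥0∞)⁻¹ • ∑ i : Fin N, Measure.dirac (a i)).map g
      = (N : ℝ≥0∞)⁻¹ • ∑ i : Fin N, Measure.dirac (g (a i)) := by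
  ext s hs
  rw [Measure.map_apply hg hs]
  simp only [Measure.smul_apply, Measure.coe_finset_sum, Finset.sum_apply,
    Measure.dirac_apply, smul_eq_mul]
  refine congrArg _ (Finset.sum_congr rfl fun i _ => ?_)
  by_cases h : g (a i) ∈ s <;> simp [Set.indicator_apply, h]

end DiracHelpers

/-- Distance-space form of the fault-detection-rate constraint (part of Theorem 1 of the
paper): with `S = {ξ : (ξ + V f̄)ᵀ P̄ (ξ + V f̄) ≤ 1}`, the relaxed distributionally robust
chance constraint holds iff `(1/N) ∑ᵢ max(η - infDist(ξ̂ᵢ, S), 0) ≤ (1 - β) η`. -/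
theorem relaxed_drcc_iff_distance_form {n m N : ℕ} (hN : 0 < N)
    (P : Matrix (Fin n) (Fin n) ℝ) (hP : P.PosSemidef)
    (V : Matrix (Fin n) (Fin m) ℝ) (f : Fin m → ℝ)
    (ξhat : Fin N → EuclideanSpace ℝ (Fin n))
    (η : ℝ) (hη : 0 < η) (β : ℝ) (hβ : β ∈ Set.Ioo (0 : ℝ) 1) :
    (sSup { r : ℝ | ∃ μ : Measure (EuclideanSpace ℝ (Fin n)),
        IsProbabilityMeasure μ ∧ Integrable (fun ξ => ‖ξ‖) μ ∧
        r = (μ { ξ : EuclideanSpace ℝ (Fin n) |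
              (toVec ξ + V.mulVec f) ⬝ᵥ P.mulVec (toVec ξ + V.mulVec f) ≤ 1 }).toReal
            - (1 / η) * wassersteinDist μ (empirical ξhat) } ≤ 1 - β)
      ↔ (1 / N : ℝ) * ∑ i : Fin N,
          max (η - infDist (ξhat i) { ξ : EuclideanSpace ℝ (Fin n) |
            (toVec ξ + V.mulVec f) ⬝ᵥ P.mulVec (toVec ξ + V.mulVec f) ≤ 1 }) 0
          ≤ (1 - β) * η := by
  obtain ⟨hβ0, hβ1⟩ := hβ
  set S : Set (EuclideanSpace ℝ (Fin n)) :=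
    { ξ | (toVec ξ + V.mulVec f) ⬝ᵥ P.mulVec (toVec ξ + V.mulVec f) ≤ 1 } with hSdef
  set A : Set ℝ := { r : ℝ | ∃ μ : Measure (EuclideanSpace ℝ (Fin n)),
      IsProbabilityMeasure μ ∧ Integrable (fun ξ => ‖ξ‖) μ ∧
      r = (μ S).toReal - (1 / η) * wassersteinDist μ (empirical ξhat) } with hAdef
  -- continuity of the quadratic form
  have hq : Continuous fun v : Fin n → ℝ => (v + V.mulVec f) ⬝ᵥ P.mulVec (v + V.mulVec f) := by
    simp only [dotProduct, Matrix.mulVec]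
    refine continuous_finset_sum _ fun j _ => ?_
    exact ((continuous_apply j).add continuous_const).mul
      (continuous_finset_sum _ fun k _ => continuous_const.mul
        ((continuous_apply k).add continuous_const))
  have hqc : Continuous fun ξ : EuclideanSpace ℝ (Fin n) =>
      (toVec ξ + V.mulVec f) ⬝ᵥ P.mulVec (toVec ξ + V.mulVec f) :=
    hq.comp (PiLp.continuous_ofLp _ _)
  have hScl : IsClosed S := isClosed_le hqc continuous_const
  have hSm : MeasurableSet S := hScl.measurableSet
  have hSne : S.Nonempty := by
    refine ⟨(EuclideanSpace.equiv (Fin n) ℝ).symm (-(V.mulVec f)), ?_⟩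
    rw [hSdef]
    show (toVec ((EuclideanSpace.equiv (Fin n) ℝ).symm (-(V.mulVec f))) + V.mulVec f)
      ⬝ᵥ P.mulVec _ ≤ 1
    rw [show toVec ((EuclideanSpace.equiv (Fin n) ℝ).symm (-(V.mulVec f))) = -(V.mulVec f)
      from rfl]
    simp
  haveI hPhat : IsProbabilityMeasure (empirical ξhat) := dcomb_isProb hN ξhat
  have hWnonneg : ∀ μ : Measure (EuclideanSpace ℝ (Fin n)),
      0 ≤ wassersteinDist μ (empirical ξhat) := fun μ =>
    Real.sInf_nonneg fun c hc => by
      obtain ⟨Q, _, _, _, _, rfl⟩ := hc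
      exact integral_nonneg fun p => norm_nonneg _
  have hd0 : ∀ x : EuclideanSpace ℝ (Fin n), 0 ≤ infDist x S := fun x => infDist_nonneg
  set g : EuclideanSpace ℝ (Fin n) → ℝ := fun x => max (η - infDist x S) 0 / η with hgdef
  have hgc : Continuous g :=
    ((continuous_const.sub (continuous_infDist_pt S)).max continuous_const).div_const η
  have hg01 : ∀ x, 0 ≤ g x ∧ g x ≤ 1 := fun x =>
    ⟨div_nonneg (le_max_right _ _) hη.le, by
      rw [hgdef, div_le_one hη]; exact max_le (by linarith [hd0 x]) hη.le⟩
  have hgint : ∫ x, g x ∂(empirical ξhat)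
      = ((1 / N : ℝ) * ∑ i : Fin N, max (η - infDist (ξhat i) S) 0) / η := by
    rw [show (empirical ξhat) = ((N : ℝ≥0∞)⁻¹ • ∑ i : Fin N, Measure.dirac (ξhat i)) from rfl,
      dcomb_integral, hgdef]
    rw [← Finset.sum_div]
    field_simp
  -- key inequality for any coupling
  have key : ∀ μ : Measure (EuclideanSpace ℝ (Fin n)), IsProbabilityMeasure μ →
      ∀ Q : Measure (EuclideanSpace ℝ (Fin n) × EuclideanSpace ℝ (Fin n)),
      IsProbabilityMeasure Q → Q.map Prod.fst = μ → Q.map Prod.snd = empirical ξhat →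
      Integrable (fun p => ‖p.1 - p.2‖) Q →
      (μ S).toReal ≤ (∫ x, g x ∂(empirical ξhat)) + η⁻¹ * ∫ p, ‖p.1 - p.2‖ ∂Q := by
    intro μ hμ Q hQ hfst hsnd hint
    haveI := hQ
    have hind : (μ S).toReal = ∫ p, S.indicator 1 p.1 ∂Q := by
      rw [← measureReal_def, ← integral_indicator_one hSm, ← hfst,
        integral_map measurable_fst.aemeasurable
          (stronglyMeasurable_one.indicator hSm).aestronglyMeasurable]
    have hpt : ∀ p : EuclideanSpace ℝ (Fin n) × EuclideanSpace ℝ (Fin n),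
        S.indicator 1 p.1 ≤ g p.2 + η⁻¹ * ‖p.1 - p.2‖ := by
      intro p
      by_cases hp : p.1 ∈ S
      · rw [Set.indicator_of_mem hp]
        have hdle : infDist p.2 S ≤ ‖p.1 - p.2‖ := by
          rw [← dist_eq_norm, dist_comm]
          exact infDist_le_dist_of_mem hp
        have h1 : η ≤ max (η - infDist p.2 S) 0 + ‖p.1 - p.2‖ := by
          rcases le_total (infDist p.2 S) η with h | h
          · calc η = (η - infDist p.2 S) + infDist p.2 S := by ring
              _ ≤ _ := add_le_add (le_max_left _ _) hdle
          · calc η ≤ infDist p.2 S := h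
              _ ≤ ‖p.1 - p.2‖ := hdle
              _ ≤ _ := le_add_of_nonneg_left (le_max_right _ _)
        have heq : g p.2 + η⁻¹ * ‖p.1 - p.2‖
            = (max (η - infDist p.2 S) 0 + ‖p.1 - p.2‖) / η := by
          rw [hgdef, inv_mul_eq_div, ← add_div]
        show (1 : ℝ) ≤ _
        rw [heq]
        exact (one_le_div hη).2 h1
      · rw [Set.indicator_of_notMem hp]
        exact add_nonneg (hg01 _).1 (by positivity)
    have hintL : Integrable (fun p : EuclideanSpace ℝ (Fin n) × EuclideanSpace ℝ (Fin n) =>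
        S.indicator (1 : EuclideanSpace ℝ (Fin n) → ℝ) p.1) Q := by
      have heq : (fun p : EuclideanSpace ℝ (Fin n) × EuclideanSpace ℝ (Fin n) =>
          S.indicator (1 : EuclideanSpace ℝ (Fin n) → ℝ) p.1) = (Prod.fst ⁻¹' S).indicator 1 := by
        funext p; by_cases hp : p.1 ∈ S <;> simp [Set.indicator_apply, hp]
      rw [heq]
      exact (integrable_const 1).indicator (measurable_fst hSm)
    have hintg : Integrable (fun p : EuclideanSpace ℝ (Fin n) × EuclideanSpace ℝ (Fin n) =>
        g p.2) Q := by
      refine Integrable.mono' (integrable_const 1)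
        ((hgc.comp continuous_snd).aestronglyMeasurable) ?_
      exact Filter.Eventually.of_forall fun p => by
        rw [Real.norm_eq_abs, abs_of_nonneg (hg01 _).1]; exact (hg01 _).2
    have hintR : Integrable (fun p : EuclideanSpace ℝ (Fin n) × EuclideanSpace ℝ (Fin n) =>
        g p.2 + η⁻¹ * ‖p.1 - p.2‖) Q := hintg.add (hint.const_mul _)
    have hmono := integral_mono hintL hintR hpt
    have hsplit : ∫ p, (g p.2 + η⁻¹ * ‖p.1 - p.2‖) ∂Q
        = (∫ p, g p.2 ∂Q) + η⁻¹ * ∫ p, ‖p.1 - p.2‖ ∂Q := by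
      rw [integral_add hintg (hint.const_mul _), integral_const_mul]
    have hgQ : ∫ p, g p.2 ∂Q = ∫ x, g x ∂(empirical ξhat) := by
      rw [← hsnd, integral_map measurable_snd.aemeasurable
        (hgc.aestronglyMeasurable)]
    rw [hind]
    exact le_of_le_of_eq hmono (by rw [hsplit, hgQ])
  constructor
  · -- forward
    intro hsup
    have hprop : ∀ i : Fin N, ∃ z ∈ S, infDist (ξhat i) S = dist (ξhat i) z :=
      fun i => hScl.exists_infDist_eq_dist hSne (ξhat i)
    choose y hyS hyd using hprop
    set ζ : Fin N → EuclideanSpace ℝ (Fin n) :=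
      fun i => if infDist (ξhat i) S < η then y i else ξhat i with hζ
    have hbdd : BddAbove A := by
      refine ⟨1, ?_⟩
      rintro r ⟨μ, hμ, hμint, rfl⟩
      haveI := hμ
      have h1 : (μ S).toReal ≤ 1 := by
        simpa using ENNReal.toReal_mono ENNReal.one_ne_top prob_le_one
      have h2 := hWnonneg μ
      nlinarith [mul_nonneg (by positivity : (0:ℝ) ≤ 1/η) h2]
    have hcost : wassersteinDist (empirical ζ) (empirical ξhat)
        ≤ (N : ℝ)⁻¹ * ∑ i : Fin N, ‖ζ i - ξhat i‖ := by
      apply csInf_le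
      · exact ⟨0, fun c hc => by
          obtain ⟨Q, _, _, _, _, rfl⟩ := hc
          exact integral_nonneg fun p => norm_nonneg _⟩
      · refine ⟨(N : ℝ≥0∞)⁻¹ • ∑ i : Fin N, Measure.dirac (ζ i, ξhat i),
          dcomb_isProb hN _, ?_, ?_, dcomb_integrable hN _ _, ?_⟩
        · rw [dcomb_map _ measurable_fst]; rfl
        · rw [dcomb_map _ measurable_snd]; rfl
        · rw [dcomb_integral]
    have hμ0S : ((empirical ζ) S).toReal = (N : ℝ)⁻¹ * ∑ i : Fin N, S.indicator 1 (ζ i) := by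
      rw [← measureReal_def, ← integral_indicator_one hSm]
      exact dcomb_integral ζ _
    have hper : ∀ i : Fin N, max (η - infDist (ξhat i) S) 0 / η
        ≤ S.indicator 1 (ζ i) - ‖ζ i - ξhat i‖ / η := by
      intro i
      by_cases hlt : infDist (ξhat i) S < η
      · have hζi : ζ i = y i := if_pos hlt
        rw [hζi, Set.indicator_of_mem (hyS i)]
        have hny : ‖y i - ξhat i‖ = infDist (ξhat i) S := by
          rw [← dist_eq_norm, dist_comm, ← hyd i]
        rw [hny, max_eq_left (by linarith)]
        rw [sub_div, div_self hη.ne']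
        exact le_refl _
      · have hζi : ζ i = ξhat i := if_neg hlt
        push_neg at hlt
        rw [hζi, sub_self, norm_zero, zero_div, max_eq_right (by linarith), zero_div, sub_zero]
        exact Set.indicator_nonneg (fun _ _ => zero_le_one) _
    have hmemA : ((empirical ζ) S).toReal
        - (1 / η) * wassersteinDist (empirical ζ) (empirical ξhat) ∈ A :=
      ⟨empirical ζ, dcomb_isProb hN ζ, dcomb_integrable hN ζ _, rfl⟩
    have hchain : (N : ℝ)⁻¹ * ∑ i : Fin N, max (η - infDist (ξhat i) S) 0 / η
        ≤ 1 - β := by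
      have h1 : ∑ i : Fin N, max (η - infDist (ξhat i) S) 0 / η
          ≤ (∑ i : Fin N, S.indicator 1 (ζ i)) - ∑ i : Fin N, ‖ζ i - ξhat i‖ / η := by
        rw [← Finset.sum_sub_distrib]
        exact Finset.sum_le_sum fun i _ => hper i
      have hNpos : (0:ℝ) < (N:ℝ)⁻¹ := by positivity
      have h2 := le_trans (le_csSup hbdd hmemA) hsup
      rw [hμ0S] at h2
      have h3 := mul_le_mul_of_nonneg_left h1 hNpos.le
      have h4 := mul_le_mul_of_nonneg_left hcost (by positivity : (0:ℝ) ≤ 1/η)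
      have h5 : ∑ i : Fin N, ‖ζ i - ξhat i‖ / η = (∑ i : Fin N, ‖ζ i - ξhat i‖) / η :=
        (Finset.sum_div _ _ _).symm
      rw [h5] at h3
      calc (N : ℝ)⁻¹ * ∑ i : Fin N, max (η - infDist (ξhat i) S) 0 / η
          ≤ (N:ℝ)⁻¹ * ((∑ i : Fin N, S.indicator 1 (ζ i))
              - (∑ i : Fin N, ‖ζ i - ξhat i‖) / η) := h3
        _ ≤ 1 - β := by ring_nf at h2 h4 ⊢; linarith
    rw [← Finset.sum_div, ← mul_div_assoc, div_le_iff₀ hη] at hchain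
    rwa [one_div]
  · -- reverse
    intro hrhs
    refine Real.sSup_le ?_ (by linarith)
    rintro r ⟨μ, hμ, hμint, rfl⟩
    haveI := hμ
    have hgle : ∫ x, g x ∂(empirical ξhat) ≤ 1 - β := by
      rw [hgint, div_le_iff₀ hη]
      linarith
    have hWlb : η * ((μ S).toReal - (1 - β)) ≤ wassersteinDist μ (empirical ξhat) := by
      refine le_csInf ?_ ?_
      · have hPhat_int : Integrable (fun x : EuclideanSpace ℝ (Fin n) => ‖x‖)
            (empirical ξhat) := dcomb_integrable hN ξhat _
        have h1 : Integrable (fun p : EuclideanSpace ℝ (Fin n) × EuclideanSpace ℝ (Fin n) =>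
            ‖p.1‖) (μ.prod (empirical ξhat)) := by
          have h := hμint
          rw [show μ = (μ.prod (empirical ξhat)).map Prod.fst from by
            rw [Measure.map_fst_prod]; simp] at h
          exact (integrable_map_measure continuous_norm.aestronglyMeasurable
            measurable_fst.aemeasurable).1 h
        have h2 : Integrable (fun p : EuclideanSpace ℝ (Fin n) × EuclideanSpace ℝ (Fin n) =>
            ‖p.2‖) (μ.prod (empirical ξhat)) := by
          have h := hPhat_int
          rw [show (empirical ξhat) = (μ.prod (empirical ξhat)).map Prod.snd from by
            rw [Measure.map_snd_prod]; simp] at h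
          exact (integrable_map_measure continuous_norm.aestronglyMeasurable
            measurable_snd.aemeasurable).1 h
        have hQint : Integrable (fun p : EuclideanSpace ℝ (Fin n) × EuclideanSpace ℝ (Fin n) =>
            ‖p.1 - p.2‖) (μ.prod (empirical ξhat)) := by
          refine Integrable.mono' (h1.add h2)
            ((continuous_fst.sub continuous_snd).norm.aestronglyMeasurable) ?_
          exact Filter.Eventually.of_forall fun p => by
            rw [norm_norm]; exact norm_sub_le _ _
        exact ⟨_, μ.prod (empirical ξhat), inferInstance,
          by rw [Measure.map_fst_prod]; simp, by rw [Measure.map_snd_prod]; simp, hQint, rfl⟩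
      · rintro c ⟨Q, hQ, hfst, hsnd, hQint, rfl⟩
        have hk := key μ hμ Q hQ hfst hsnd hQint
        nlinarith [mul_inv_cancel₀ hη.ne', integral_nonneg (μ := Q) (f := fun p : EuclideanSpace ℝ (Fin n) × EuclideanSpace ℝ (Fin n) => ‖p.1 - p.2‖)
          (fun p => norm_nonneg (p.1 - p.2))]
    have h3 : (μ S).toReal - (1 - β) ≤ wassersteinDist μ (empirical ξhat) / η :=
      (le_div_iff₀ hη).2 (by linarith [hWlb])
    have h4 : (1 / η) * wassersteinDist μ (empirical ξhat)
        = wassersteinDist μ (empirical ξhat) / η := by ring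
    linarith
end

section
/- Let P̄ be an n×n real positive semidefinite matrix, V an n×m real matrix, f̄ ∈ ℝ^m, ξ̂ ∈ ℝ^n, and let S = {ξ ∈ ℝ^n : (ξ+Vf̄)ᵀ P̄ (ξ+Vf̄) ≤ 1}. Let Ξ = {ξ ∈ ℝ^n : (ξ−c_j)ᵀ Ω_j (ξ−c_j) ≤ 1 for all j = 1,…,N_j} where each Ω_j is an n×n real positive definite matrix and c_j ∈ ℝ^n. Suppose π ≥ 0, ω_1,…,ω_{N_j} ≥ 0, and p, u ∈ ℝ satisfy: (i) the (n+1)×(n+1) block matrix [[I, −ξ̂],[−ξ̂ᵀ, ξ̂ᵀξ̂ − p]] + ∑_{j=1}^{N_j} ω_j·[[Ω_j, −Ω_j c_j],[c_jᵀΩ_j, c_jᵀΩ_j c_j − 1]] + π·[[P̄, P̄Vf̄],[f̄ᵀVᵀP̄, f̄ᵀVᵀP̄Vf̄ − 1]] is positive semidefinite, and (ii) the 2×2 matrix [[p, u],[u, 1]] is positive semidefinite. Then for every ξ ∈ S ∩ Ξ, one has u ≤ ‖ξ − ξ̂‖; in particular, if S ∩ Ξ is nonempty, then u ≤ inf_{ξ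 ∈ S ∩ Ξ} ‖ξ − ξ̂‖. -/
open Matrix Metric

lemma quad_homMat {n : ℕ} (A : Matrix (Fin n) (Fin n) ℝ) (b : Fin n → ℝ) (c : ℝ)
    (x : Fin n → ℝ) :
    (Sum.elim x (fun _ => (1:ℝ))) ⬝ᵥ (homMat A b c) *ᵥ (Sum.elim x fun _ => 1)
      = x ⬝ᵥ A *ᵥ x + 2 * (b ⬝ᵥ x) + c := by
  simp only [homMat, Matrix.fromBlocks_mulVec, sumElim_dotProduct_sumElim,
    dotProduct_add]
  simp [Matrix.mulVec, dotProduct, Fin.sum_univ_one]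
  rw [Finset.sum_congr rfl fun i _ => mul_comm (x i) (b i)]
  ring

lemma expand_quad {n : ℕ} {A : Matrix (Fin n) (Fin n) ℝ} (hA : Aᵀ = A) (x d : Fin n → ℝ) :
    (x + d) ⬝ᵥ A *ᵥ (x + d) = x ⬝ᵥ A *ᵥ x + 2 * ((A *ᵥ d) ⬝ᵥ x) + d ⬝ᵥ A *ᵥ d := by
  have h : d ⬝ᵥ A *ᵥ x = (A *ᵥ d) ⬝ᵥ x := by
    rw [Matrix.dotProduct_mulVec]
    conv_lhs => rw [← hA]
    rw [Matrix.vecMul_transpose]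
  have h2 : x ⬝ᵥ A *ᵥ d = (A *ᵥ d) ⬝ᵥ x := dotProduct_comm _ _
  simp only [Matrix.mulVec_add, dotProduct_add, add_dotProduct, h, h2]
  ring

lemma sum_mulVec' {ι k : ℕ} (M : Fin ι → Matrix (Fin k ⊕ Fin 1) (Fin k ⊕ Fin 1) ℝ)
    (v : Fin k ⊕ Fin 1 → ℝ) :
    (∑ j, M j) *ᵥ v = ∑ j, M j *ᵥ v := by
  ext i
  simp only [Matrix.mulVec, dotProduct, Matrix.sum_apply, Finset.sum_apply,
    Finset.sum_mul]
  rw [Finset.sum_comm]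

lemma dot_sum' {ι k : ℕ} (v : Fin k ⊕ Fin 1 → ℝ) (w : Fin ι → (Fin k ⊕ Fin 1) → ℝ) :
    v ⬝ᵥ (∑ j, w j) = ∑ j, v ⬝ᵥ w j := by
  simp only [dotProduct, Finset.sum_apply, Finset.mul_sum]
  rw [Finset.sum_comm]

/-- Bounded-support extension (equation (18) in Remark 4 of the paper): with the
ellipsoidal-intersection support set `Ξ = {ξ : (ξ - cⱼ)ᵀ Ωⱼ (ξ - cⱼ) ≤ 1, ∀j}`, any feasible
point `(π, ω, p, u)` of the augmented SDP yields `u ≤ ‖ξ - ξ̂‖` for all `ξ ∈ S ∩ Ξ`; in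
particular `u` is a lower bound on `inf_{ξ ∈ S ∩ Ξ} ‖ξ - ξ̂‖` whenever `S ∩ Ξ ≠ ∅`. -/
theorem bounded_support_sdp_lower_bound {n m Nj : ℕ}
    (P : Matrix (Fin n) (Fin n) ℝ) (hP : P.PosSemidef)
    (V : Matrix (Fin n) (Fin m) ℝ) (f : Fin m → ℝ) (ξhat : EuclideanSpace ℝ (Fin n))
    (Ω : Fin Nj → Matrix (Fin n) (Fin n) ℝ) (hΩ : ∀ j, (Ω j).PosDef)
    (cc : Fin Nj → Fin n → ℝ)
    (π : ℝ) (hπ : 0 ≤ π) (ω : Fin Nj → ℝ) (hω : ∀ j, 0 ≤ ω j) (p u : ℝ)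
    (h1 : (homMat (1 : Matrix (Fin n) (Fin n) ℝ) (-(toVec ξhat))
            (toVec ξhat ⬝ᵥ toVec ξhat - p)
          + ∑ j : Fin Nj, ω j • homMat (Ω j) (-((Ω j).mulVec (cc j)))
              ((cc j) ⬝ᵥ (Ω j).mulVec (cc j) - 1)
          + π • homMat P (P.mulVec (V.mulVec f))
              ((V.mulVec f) ⬝ᵥ P.mulVec (V.mulVec f) - 1)).PosSemidef)
    (h2 : (!![p, u; u, 1]).PosSemidef) :
    (∀ ξ : EuclideanSpace ℝ (Fin n),
      (toVec ξ + V.mulVec f) ⬝ᵥ P.mulVec (toVec ξ + V.mulVec f) ≤ 1 →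
      (∀ j : Fin Nj, (toVec ξ - cc j) ⬝ᵥ (Ω j).mulVec (toVec ξ - cc j) ≤ 1) →
        u ≤ ‖ξ - ξhat‖) ∧
    (({ ξ : EuclideanSpace ℝ (Fin n) |
          (toVec ξ + V.mulVec f) ⬝ᵥ P.mulVec (toVec ξ + V.mulVec f) ≤ 1 } ∩
        { ξ : EuclideanSpace ℝ (Fin n) |
          ∀ j : Fin Nj, (toVec ξ - cc j) ⬝ᵥ (Ω j).mulVec (toVec ξ - cc j) ≤ 1 }).Nonempty →
      u ≤ infDist ξhat
        ({ ξ : EuclideanSpace ℝ (Fin n) |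
            (toVec ξ + V.mulVec f) ⬝ᵥ P.mulVec (toVec ξ + V.mulVec f) ≤ 1 } ∩
          { ξ : EuclideanSpace ℝ (Fin n) |
            ∀ j : Fin Nj, (toVec ξ - cc j) ⬝ᵥ (Ω j).mulVec (toVec ξ - cc j) ≤ 1 })) := by
  -- symmetry facts
  have hPsym : Pᵀ = P := by have h := hP.1; simp at h; exact h
  have hΩsym : ∀ j, (Ω j)ᵀ = Ω j := fun j => by have h := (hΩ j).1; simp at h; exact h
  -- u² ≤ p from h2
  have hq : ∀ t : ℝ, 0 ≤ p * (t * t) + (2 * u) * t + 1 := by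
    intro t
    have h := h2.dotProduct_mulVec_nonneg ![t, 1]
    simp [dotProduct, Matrix.mulVec, Fin.sum_univ_two] at h
    nlinarith [h]
  have hd := discrim_le_zero hq
  rw [discrim] at hd
  have hu2 : u ^ 2 ≤ p := by nlinarith
  have main : ∀ ξ : EuclideanSpace ℝ (Fin n),
      (toVec ξ + V.mulVec f) ⬝ᵥ P.mulVec (toVec ξ + V.mulVec f) ≤ 1 →
      (∀ j : Fin Nj, (toVec ξ - cc j) ⬝ᵥ (Ω j).mulVec (toVec ξ - cc j) ≤ 1) →
        u ≤ ‖ξ - ξhat‖ := by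
    intro ξ hS hΞ
    set x : Fin n → ℝ := toVec ξ with hxdef
    set z : Fin n ⊕ Fin 1 → ℝ := Sum.elim x fun _ => 1 with hzdef
    have e1 : z ⬝ᵥ homMat (1 : Matrix (Fin n) (Fin n) ℝ) (-(toVec ξhat))
        (toVec ξhat ⬝ᵥ toVec ξhat - p) *ᵥ z
        = (x - toVec ξhat) ⬝ᵥ (x - toVec ξhat) - p := by
      rw [hzdef, quad_homMat]
      simp only [Matrix.one_mulVec, sub_dotProduct, dotProduct_sub,
        neg_dotProduct]
      rw [dotProduct_comm x (toVec ξhat)]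
      ring
    have e2 : z ⬝ᵥ (∑ j : Fin Nj, ω j • homMat (Ω j) (-((Ω j).mulVec (cc j)))
          ((cc j) ⬝ᵥ (Ω j).mulVec (cc j) - 1)) *ᵥ z
        = ∑ j : Fin Nj, ω j * ((x - cc j) ⬝ᵥ (Ω j) *ᵥ (x - cc j) - 1) := by
      rw [sum_mulVec', dot_sum']
      refine Finset.sum_congr rfl fun j _ => ?_
      rw [Matrix.smul_mulVec, dotProduct_smul, smul_eq_mul]
      congr 1
      rw [hzdef, quad_homMat, sub_eq_add_neg x (cc j),
        expand_quad (hΩsym j) x (-(cc j))]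
      simp [Matrix.mulVec_neg, neg_dotProduct, dotProduct_neg]
      ring
    have e3 : z ⬝ᵥ (π • homMat P (P.mulVec (V.mulVec f))
          ((V.mulVec f) ⬝ᵥ P.mulVec (V.mulVec f) - 1)) *ᵥ z
        = π * ((x + V.mulVec f) ⬝ᵥ P *ᵥ (x + V.mulVec f) - 1) := by
      rw [Matrix.smul_mulVec, dotProduct_smul, smul_eq_mul]
      congr 1
      rw [hzdef, quad_homMat, expand_quad hPsym x (V.mulVec f)]
      ring
    have hz0 : 0 ≤ ((x - toVec ξhat) ⬝ᵥ (x - toVec ξhat) - p)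
        + (∑ j : Fin Nj, ω j * ((x - cc j) ⬝ᵥ (Ω j) *ᵥ (x - cc j) - 1))
        + π * ((x + V.mulVec f) ⬝ᵥ P *ᵥ (x + V.mulVec f) - 1) := by
      have h := h1.dotProduct_mulVec_nonneg z
      rw [Matrix.add_mulVec, Matrix.add_mulVec, dotProduct_add,
        dotProduct_add, star_trivial, e1, e2, e3] at h
      simpa using h
    have hT2 : (∑ j : Fin Nj, ω j * ((x - cc j) ⬝ᵥ (Ω j) *ᵥ (x - cc j) - 1)) ≤ 0 :=
      Finset.sum_nonpos fun j _ =>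
        mul_nonpos_of_nonneg_of_nonpos (hω j) (by linarith [hΞ j])
    have hT3 : π * ((x + V.mulVec f) ⬝ᵥ P *ᵥ (x + V.mulVec f) - 1) ≤ 0 :=
      mul_nonpos_of_nonneg_of_nonpos hπ (by linarith)
    have hple : p ≤ (x - toVec ξhat) ⬝ᵥ (x - toVec ξhat) := by linarith
    have hnorm : (x - toVec ξhat) ⬝ᵥ (x - toVec ξhat) = ‖ξ - ξhat‖ ^ 2 := by
      rw [EuclideanSpace.norm_eq, Real.sq_sqrt (by positivity)]
      simp [dotProduct, toVec, sq, hxdef]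
    have hfin : u ^ 2 ≤ ‖ξ - ξhat‖ ^ 2 := by rw [← hnorm]; linarith
    calc u ≤ |u| := le_abs_self u
      _ = Real.sqrt (u ^ 2) := (Real.sqrt_sq_eq_abs u).symm
      _ ≤ Real.sqrt (‖ξ - ξhat‖ ^ 2) := Real.sqrt_le_sqrt hfin
      _ = ‖ξ - ξhat‖ := Real.sqrt_sq (norm_nonneg _)
  refine ⟨main, fun hne => ?_⟩
  by_contra hlt
  push_neg at hlt
  obtain ⟨y, hy, hdy⟩ := (Metric.infDist_lt_iff hne).1 hlt
  have hu := main y hy.1 hy.2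
  rw [dist_comm, dist_eq_norm] at hdy
  linarith
end
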